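/- arXiv:1606.07920 — 3 statements merged into one kernel-verified Lean document; each statement's English description precedes it below -/
import Mathlib

section
/- Let F = (F₁,…,F_d) ∈ H(E)^d, μ ∈ M(E), and fix a multi-index m = (m₁,…,m_d) ∈ ℕ^d. Set F̄ := (F₁, zF₁, …, z^{m₁−1}F₁, F₂, …, z^{m_d−1}F_d) = (f₁,…,f_{|m|}) ∈ H(E)^{|m|} and m̄ := (1,1,…,1) ∈ ℕ^{|m|}, so |m̄| = |m|. Then: (i) F is polynomially independent with respect to m if and only if F̄ is polynomially independent with respect to m̄; (ii) the poles of F and their orders coincide with the poles of F̄ and their orders; (iii) ρ_m(F) = ρ_m(F̄) for every integer m ≥ 0; (iv) a monic polynomial Q is a denominator of an (n,m) orthogonal Hermite–Padé approximant of F with respect to μ if and only if it is a denominator of an (n,m̄) orthogonal Hermite–Padé approximant of F̄ with respect to μ; (v) the system poles of F with respect to m and their orders coincide with the system poles of F̄ with respect to m̄ and their orders. -/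
open Complex MeasureTheory Polynomial Set Filter Topology
open scoped ENNReal

noncomputable section

/-- The inner product `⟨g,h⟩_μ = ∫ g · conj h dμ`. -/
def mInner (μ : Measure ℂ) (g h : ℂ → ℂ) : ℂ :=
  ∫ ζ, g ζ * (starRingEnd ℂ) (h ζ) ∂μ

/-- The support of a Borel measure on ℂ. -/
def measSupport (μ : Measure ℂ) : Set ℂ :=
  {z | ∀ U ∈ 𝓝 z, μ U ≠ 0}

/-- `μ ∈ M(E)`: a finite positive Borel measure with infinite support contained in `E`. -/
def MeasClass (E : Set ℂ) (μ : Measure ℂ) : Prop :=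
  IsFiniteMeasure μ ∧ measSupport μ ⊆ E ∧ (measSupport μ).Infinite

/-- `p` is the sequence of orthonormal polynomials of `μ` (degree `n`, positive
leading coefficient, orthonormal). -/
def IsONPolys (μ : Measure ℂ) (p : ℕ → Polynomial ℂ) : Prop :=
  (∀ n, (p n).natDegree = n) ∧
  (∀ n, ∃ κ : ℝ, 0 < κ ∧ (p n).leadingCoeff = (κ : ℂ)) ∧
  (∀ n₁ n₂, mInner μ (fun z => (p n₁).eval z) (fun z => (p n₂).eval z)
      = if n₁ = n₂ then 1 else 0)

/-- The second type functions `s_n(z) = ∫ conj(p_n(ζ))/(z-ζ) dμ(ζ)`. -/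
def sFun (μ : Measure ℂ) (p : ℕ → Polynomial ℂ) (n : ℕ) (z : ℂ) : ℂ :=
  ∫ ζ, (starRingEnd ℂ) ((p n).eval ζ) / (z - ζ) ∂μ

/-- `Φ` is the exterior conformal map of `E` : a holomorphic bijection of `ℂ∖E` onto
the exterior of the closed unit disk with `Φ(z)/z → c > 0` at infinity. -/
def IsExtConfMap (E : Set ℂ) (Φ : ℂ → ℂ) : Prop :=
  DifferentiableOn ℂ Φ Eᶜ ∧
  Set.BijOn Φ Eᶜ {w : ℂ | 1 < ‖w‖} ∧
  ∃ c : ℝ, 0 < c ∧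
    Filter.Tendsto (fun z => Φ z / z) (Bornology.cobounded ℂ) (𝓝 (c : ℂ))

/-- The canonical domain of (extended real) index `r` :
`D_r = E ∪ {z ∉ E : |Φ(z)| < r}`. -/
def Dcan (E : Set ℂ) (Φ : ℂ → ℂ) (r : ℝ≥0∞) : Set ℂ :=
  E ∪ {z | z ∉ E ∧ ENNReal.ofReal (‖Φ z‖) < r}

/-- The level curve `Γ_ρ = {z : |Φ(z)| = ρ}`. -/
def levCurve (E : Set ℂ) (Φ : ℂ → ℂ) (ρ : ℝ) : Set ℂ :=
  {z | z ∉ E ∧ ‖Φ z‖ = ρ}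

/-- `f ∈ H(E)` : `f` is holomorphic on some open neighborhood of `E`. -/
def HoloNhd (E : Set ℂ) (f : ℂ → ℂ) : Prop :=
  ∃ U, IsOpen U ∧ E ⊆ U ∧ DifferentiableOn ℂ f U

/-- `f` and `g` agree on some open neighborhood of `E`. -/
def AgreesNear (E : Set ℂ) (f g : ℂ → ℂ) : Prop :=
  ∃ U, IsOpen U ∧ E ⊆ U ∧ Set.EqOn f g U

/-- `f` (holomorphic near `E`) admits a holomorphic extension to the set `D`. -/
def ExtHolo (E : Set ℂ) (f : ℂ → ℂ) (D : Set ℂ) : Prop :=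
  ∃ g, DifferentiableOn ℂ g D ∧ AgreesNear E f g

/-- `f` extends to `D_ρ` meromorphically with at most `m` poles counting
multiplicities (i.e. some monic polynomial `q` of degree `≤ m` kills the poles). -/
def MeroExtTo (E : Set ℂ) (Φ : ℂ → ℂ) (f : ℂ → ℂ) (m : ℕ) (ρ : ℝ) : Prop :=
  ∃ q : Polynomial ℂ, q.Monic ∧ q.natDegree ≤ m ∧
    ExtHolo E (fun z => q.eval z * f z) (Dcan E Φ (ENNReal.ofReal ρ))

/-- `ρ_m(f)` : the index of the largest canonical domain to which `f` extends
meromorphically with at most `m` poles. -/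
def rhoM (E : Set ℂ) (Φ : ℂ → ℂ) (f : ℂ → ℂ) (m : ℕ) : ℝ≥0∞ :=
  sSup {r | ∃ ρ : ℝ, 1 < ρ ∧ r = ENNReal.ofReal ρ ∧ MeroExtTo E Φ f m ρ}

/-- `ρ_0(f)`. -/
def rho0 (E : Set ℂ) (Φ : ℂ → ℂ) (f : ℂ → ℂ) : ℝ≥0∞ := rhoM E Φ f 0

/-- `μ ∈ Reg₁(E)` : `|p_n(z)|^{1/n} → |Φ(z)|` uniformly on compact subsets of `ℂ∖E`. -/
def Reg1 (E : Set ℂ) (Φ : ℂ → ℂ) (μ : Measure ℂ) (p : ℕ → Polynomial ℂ) : Prop :=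
  ∀ K : Set ℂ, IsCompact K → K ⊆ Eᶜ →
    TendstoUniformlyOn (fun n z => ‖(p n).eval z‖ ^ (1 / (n : ℝ)))
      (fun z => ‖Φ z‖) Filter.atTop K

/-- `μ ∈ Reg₂(E)` : `|s_n(z)|^{1/n} → |Φ(z)|⁻¹` uniformly on compact subsets of `ℂ∖E`. -/
def Reg2 (E : Set ℂ) (Φ : ℂ → ℂ) (μ : Measure ℂ) (p : ℕ → Polynomial ℂ) : Prop :=
  ∀ K : Set ℂ, IsCompact K → K ⊆ Eᶜ →
    TendstoUniformlyOn (fun n z => ‖sFun μ p n z‖ ^ (1 / (n : ℝ)))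
      (fun z => (‖Φ z‖)⁻¹) Filter.atTop K

/-- `μ ∈ Reg_{1,2}(E)`. -/
def Reg12 (E : Set ℂ) (Φ : ℂ → ℂ) (μ : Measure ℂ) (p : ℕ → Polynomial ℂ) : Prop :=
  Reg1 E Φ μ p ∧ Reg2 E Φ μ p

/-- `μ ∈ Reg_{1,2}^m(E)` : additionally `κ_{n-m}/κ_n ≥ c > 0` for all large `n`. -/
def Reg12m (E : Set ℂ) (Φ : ℂ → ℂ) (μ : Measure ℂ) (p : ℕ → Polynomial ℂ) (m : ℕ) : Prop :=
  Reg12 E Φ μ p ∧ ∃ c : ℝ, 0 < c ∧ ∃ n₀ : ℕ, ∀ n ≥ n₀,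
    c ≤ ‖(p (n - m)).leadingCoeff‖ / ‖(p n).leadingCoeff‖

/-- A denominator of an `(n,m)` orthogonal Hermite–Padé approximant of the system `F`. -/
def IsHPDenom {ι : Type*} [Fintype ι] (μ : Measure ℂ) (p : ℕ → Polynomial ℂ)
    (F : ι → ℂ → ℂ) (m : ι → ℕ) (n : ℕ) (Q : Polynomial ℂ) : Prop :=
  Q.Monic ∧ Q.natDegree ≤ ∑ i, m i ∧
  ∀ i, ∀ k < m i,
    mInner μ (fun z => Q.eval z * z ^ k * F i z) (fun z => (p n).eval z) = 0

/-- The numerator `P^μ_{n,m,k,i}` associated to a denominator `Q`. -/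
def IsHPNum (μ : Measure ℂ) (p : ℕ → Polynomial ℂ) (Q : Polynomial ℂ) (f : ℂ → ℂ)
    (k n : ℕ) (P : Polynomial ℂ) : Prop :=
  P.degree < (n : WithBot ℕ) ∧
  ∀ j ≤ n, mInner μ (fun z => Q.eval z * z ^ k * f z - P.eval z)
      (fun z => (p j).eval z) = 0

/-- A denominator of an `(n,m,m*)` incomplete orthogonal Padé approximant of `f`. -/
def IsIncDenom (μ : Measure ℂ) (p : ℕ → Polynomial ℂ) (f : ℂ → ℂ)
    (m mstar n : ℕ) (Q : Polynomial ℂ) : Prop :=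
  Q.Monic ∧ Q.natDegree ≤ m ∧
  ∀ k < mstar, mInner μ (fun z => Q.eval z * z ^ k * f z) (fun z => (p n).eval z) = 0

/-- The coefficient norm `‖∑ a_k z^k‖ = ∑ |a_k|` of a polynomial. -/
def coeffNorm (Q : Polynomial ℂ) : ℝ :=
  ∑ k ∈ Finset.range (Q.natDegree + 1), ‖Q.coeff k‖

/-- `limsup_n a_n^{1/n}` computed in `ℝ≥0∞`. -/
def limsupRoot (a : ℕ → ℝ) : ℝ≥0∞ :=
  Filter.limsup (fun n => ENNReal.ofReal (a n ^ (1 / (n : ℝ)))) Filter.atTop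

/-- The sup norm of `f` on `K`. -/
def supNorm (f : ℂ → ℂ) (K : Set ℂ) : ℝ :=
  sSup ((fun z => ‖f z‖) '' K)

-- `‖Φ‖_K`, replaced by `1` when `K ⊆ E`.
open scoped Classical in
def phiNormK (E : Set ℂ) (Φ : ℂ → ℂ) (K : Set ℂ) : ℝ :=
  if K ⊆ E then 1 else supNorm Φ K

/-- `g` has a pole of exact order `t` at `ξ`. -/
def IsPoleOrd (g : ℂ → ℂ) (ξ : ℂ) (t : ℕ) : Prop :=
  ∃ h : ℂ → ℂ, (∃ V, IsOpen V ∧ ξ ∈ V ∧ DifferentiableOn ℂ h V) ∧ h ξ ≠ 0 ∧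
    ∀ᶠ z in 𝓝[≠] ξ, g z = h z / (z - ξ) ^ t

/-- `g` is holomorphic on a neighborhood of the closure of `D_{|Φ(ξ)|}` except for a
pole at `ξ` of exact order `t`. -/
def HoloExceptPole (E : Set ℂ) (Φ : ℂ → ℂ) (g : ℂ → ℂ) (ξ : ℂ) (t : ℕ) : Prop :=
  ∃ U, IsOpen U ∧ closure (Dcan E Φ (ENNReal.ofReal (‖Φ ξ‖))) ⊆ U ∧
    DifferentiableOn ℂ g (U \ {ξ}) ∧ IsPoleOrd g ξ t

/-- `g` extends a polynomial combination `∑ vᵢ Fᵢ`, `deg vᵢ < mᵢ`, of the system `F`. -/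
def IsCombExt {ι : Type*} [Fintype ι] (E : Set ℂ) (F : ι → ℂ → ℂ) (m : ι → ℕ)
    (g : ℂ → ℂ) : Prop :=
  ∃ v : ι → Polynomial ℂ, (∀ i, (v i).degree < (m i : WithBot ℕ)) ∧
    AgreesNear E (fun z => ∑ i, (v i).eval z * F i z) g

/-- For each `t = 1,…,τ` there is a polynomial combination with a pole of exact order
`t` at `ξ`, holomorphic elsewhere on a neighborhood of `closure D_{|Φ(ξ)|}`. -/
def SysAll {ι : Type*} [Fintype ι] (E : Set ℂ) (Φ : ℂ → ℂ) (F : ι → ℂ → ℂ)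
    (m : ι → ℕ) (ξ : ℂ) (τ : ℕ) : Prop :=
  ∀ t, 1 ≤ t → t ≤ τ → ∃ g, IsCombExt E F m g ∧ HoloExceptPole E Φ g ξ t

/-- `ξ` is a system pole of order `τ` of `F` with respect to `m`. -/
def IsSystemPoleOrd {ι : Type*} [Fintype ι] (E : Set ℂ) (Φ : ℂ → ℂ) (F : ι → ℂ → ℂ)
    (m : ι → ℕ) (ξ : ℂ) (τ : ℕ) : Prop :=
  0 < τ ∧ SysAll E Φ F m ξ τ ∧ ¬ SysAll E Φ F m ξ (τ + 1)

/-- `S` is the set of system poles of `F` w.r.t. `m` and `ord` gives their orders. -/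
def SystemPoleData {ι : Type*} [Fintype ι] (E : Set ℂ) (Φ : ℂ → ℂ) (F : ι → ℂ → ℂ)
    (m : ι → ℕ) (S : Finset ℂ) (ord : ℂ → ℕ) : Prop :=
  (∀ ξ, ξ ∈ S ↔ ∃ τ, IsSystemPoleOrd E Φ F m ξ τ) ∧
  ∀ ξ ∈ S, IsSystemPoleOrd E Φ F m ξ (ord ξ)

/-- `F` has exactly `k` system poles with respect to `m`, counting multiplicities. -/
def HasExactlySysPoles {ι : Type*} [Fintype ι] (E : Set ℂ) (Φ : ℂ → ℂ) (F : ι → ℂ → ℂ)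
    (m : ι → ℕ) (k : ℕ) : Prop :=
  ∃ S ord, SystemPoleData E Φ F m S ord ∧ ∑ ξ ∈ S, ord ξ = k

/-- `ρ_{ξ,t}(F,m)` : the largest of the numbers `ρ_t(g)` over polynomial combinations
`g` with a pole of exact order `t` at `ξ`. -/
def rhoXiT {ι : Type*} [Fintype ι] (E : Set ℂ) (Φ : ℂ → ℂ) (F : ι → ℂ → ℂ)
    (m : ι → ℕ) (ξ : ℂ) (t : ℕ) : ℝ≥0∞ :=
  sSup {r | ∃ g, IsCombExt E F m g ∧ HoloExceptPole E Φ g ξ t ∧ r = rhoM E Φ g t}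

/-- `𝛒_{ξ,t}(F,m) = min_{k=1,…,t} ρ_{ξ,k}(F,m)`. -/
def rhoBold {ι : Type*} [Fintype ι] (E : Set ℂ) (Φ : ℂ → ℂ) (F : ι → ℂ → ℂ)
    (m : ι → ℕ) (ξ : ℂ) (t : ℕ) : ℝ≥0∞ :=
  ⨅ k ∈ Finset.Icc 1 t, rhoXiT E Φ F m ξ k

/-- Meromorphic data for `f` on `D_r` : poles `P` with orders `po`, holomorphic `H`
with `(∏_{ξ∈P}(z-ξ)^{po ξ}) f = H` and `H ξ ≠ 0` at each pole (exact orders). -/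
def MeroDataOn (E : Set ℂ) (Φ : ℂ → ℂ) (f : ℂ → ℂ) (r : ℝ≥0∞)
    (P : Finset ℂ) (po : ℂ → ℕ) (H : ℂ → ℂ) : Prop :=
  ↑P ⊆ Dcan E Φ r \ E ∧ (∀ ξ ∈ P, 0 < po ξ) ∧
  DifferentiableOn ℂ H (Dcan E Φ r) ∧ (∀ ξ ∈ P, H ξ ≠ 0) ∧
  AgreesNear E (fun z => (∏ ξ ∈ P, (z - ξ) ^ po ξ) * f z) H

/-- `ξ` is a pole of exact order `t` of the meromorphic continuation of `f`. -/
def IsPoleOfExt (E : Set ℂ) (Φ : ℂ → ℂ) (f : ℂ → ℂ) (ξ : ℂ) (t : ℕ) : Prop :=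
  ∃ ρ : ℝ, 1 < ρ ∧ ∃ P po H, MeroDataOn E Φ f (ENNReal.ofReal ρ) P po H ∧ ξ ∈ P ∧ po ξ = t

/-- The canonical domain of index `ρ` is one where all poles of `z^k Fᵢ` are system
poles whose order as poles does not exceed their order as system poles, and `z^k Fᵢ`
has no other singularities. -/
def GoodIdx {ι : Type*} [Fintype ι] (E : Set ℂ) (Φ : ℂ → ℂ) (F : ι → ℂ → ℂ)
    (m : ι → ℕ) (i : ι) (k : ℕ) (ρ : ℝ) : Prop :=
  ∃ P po H, MeroDataOn E Φ (fun z => z ^ k * F i z) (ENNReal.ofReal ρ) P po H ∧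
    ∀ ξ ∈ P, ∃ τ, IsSystemPoleOrd E Φ F m ξ τ ∧ po ξ ≤ τ

/-- `ρ_{i,k}(F,m)`. -/
def rhoIK {ι : Type*} [Fintype ι] (E : Set ℂ) (Φ : ℂ → ℂ) (F : ι → ℂ → ℂ)
    (m : ι → ℕ) (i : ι) (k : ℕ) : ℝ≥0∞ :=
  sSup {r | ∃ ρ : ℝ, 1 < ρ ∧ r = ENNReal.ofReal ρ ∧ GoodIdx E Φ F m i k ρ}

/-- The meromorphic extension of `f` to `D_{ρ_k(f)}` has exactly `k` poles counting
multiplicities (the minimal degree of a monic denominator is `k`). -/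
def ExactPoles (E : Set ℂ) (Φ : ℂ → ℂ) (f : ℂ → ℂ) (k : ℕ) : Prop :=
  (∃ q : Polynomial ℂ, q.Monic ∧ q.natDegree = k ∧
    ExtHolo E (fun z => q.eval z * f z) (Dcan E Φ (rhoM E Φ f k))) ∧
  ∀ q : Polynomial ℂ, q.Monic →
    ExtHolo E (fun z => q.eval z * f z) (Dcan E Φ (rhoM E Φ f k)) → k ≤ q.natDegree

/-- `F` is polynomially independent with respect to `m`. -/
def PolyIndep {ι : Type*} [Fintype ι] (E : Set ℂ) (F : ι → ℂ → ℂ) (m : ι → ℕ) : Prop :=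
  ¬ ∃ v : ι → Polynomial ℂ, (∀ i, (v i).degree < (m i : WithBot ℕ)) ∧ (∃ i, v i ≠ 0) ∧
    ∃ q : Polynomial ℂ, AgreesNear E (fun z => ∑ i, (v i).eval z * F i z)
      (fun z => q.eval z)

/-- `ξ` is a pole of the vector `G` of order `τ` (the largest order among components). -/
def VecPoleOrd {ι : Type*} [Fintype ι] (E : Set ℂ) (Φ : ℂ → ℂ) (G : ι → ℂ → ℂ)
    (ξ : ℂ) (τ : ℕ) : Prop :=
  (∃ i, IsPoleOfExt E Φ (G i) ξ τ) ∧ ∀ i t, IsPoleOfExt E Φ (G i) ξ t → t ≤ τ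

/-- The vector `G` extends meromorphically to `D_ρ` with at most `k` poles counting
multiplicities (common monic denominator of degree `≤ k`). -/
def VecMeroExtTo {ι : Type*} [Fintype ι] (E : Set ℂ) (Φ : ℂ → ℂ) (G : ι → ℂ → ℂ)
    (k : ℕ) (ρ : ℝ) : Prop :=
  ∃ q : Polynomial ℂ, q.Monic ∧ q.natDegree ≤ k ∧
    ∀ i, ExtHolo E (fun z => q.eval z * G i z) (Dcan E Φ (ENNReal.ofReal ρ))

/-- `ρ_k(G)` for a vector `G`. -/
def vecRhoM {ι : Type*} [Fintype ι] (E : Set ℂ) (Φ : ℂ → ℂ) (G : ι → ℂ → ℂ)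
    (k : ℕ) : ℝ≥0∞ :=
  sSup {r | ∃ ρ : ℝ, 1 < ρ ∧ r = ENNReal.ofReal ρ ∧ VecMeroExtTo E Φ G k ρ}


private lemma degC_lt_one (c : ℂ) : (Polynomial.C c).degree < ((1:ℕ) : WithBot ℕ) :=
  lt_of_le_of_lt Polynomial.degree_C_le (by exact_mod_cast zero_lt_one)

private lemma comb_fwd {ι : Type*} [Fintype ι] (F : ι → ℂ → ℂ) (m : ι → ℕ) (hm : ∀ i, 1 ≤ m i)
    (v : ι → Polynomial ℂ) (hv : ∀ i, (v i).degree < ((m i : ℕ) : WithBot ℕ)) :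
    ∃ w : (Σ i : ι, Fin (m i)) → Polynomial ℂ,
      (∀ ik, (w ik).degree < ((1:ℕ) : WithBot ℕ)) ∧
      (∀ z, ∑ ik : Σ i : ι, Fin (m i), (w ik).eval z * (z ^ (ik.2 : ℕ) * F ik.1 z)
          = ∑ i, (v i).eval z * F i z) ∧
      ((∃ i, v i ≠ 0) → ∃ ik, w ik ≠ 0) := by
  have hnd : ∀ i, (v i).natDegree < m i := by
    intro i
    rcases eq_or_ne (v i) 0 with h | h
    · rw [h, Polynomial.natDegree_zero]; exact hm i
    · exact (Polynomial.natDegree_lt_iff_degree_lt h).mpr (hv i)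
  refine ⟨fun ik => Polynomial.C ((v ik.1).coeff (ik.2 : ℕ)), fun ik => degC_lt_one _, ?_, ?_⟩
  · intro z
    rw [← Finset.univ_sigma_univ, Finset.sum_sigma]
    refine Finset.sum_congr rfl fun i _ => ?_
    calc ∑ k : Fin (m i), (Polynomial.C ((v i).coeff (k : ℕ))).eval z * (z ^ (k : ℕ) * F i z)
        = (∑ k : Fin (m i), (v i).coeff (k : ℕ) * z ^ (k : ℕ)) * F i z := by
          rw [Finset.sum_mul]
          exact Finset.sum_congr rfl fun k _ => by simp [mul_assoc]
      _ = (v i).eval z * F i z := by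
          rw [Fin.sum_univ_eq_sum_range (fun j => (v i).coeff j * z ^ j),
            ← Polynomial.eval_eq_sum_range' (hnd i)]
  · rintro ⟨i, hvi⟩
    exact ⟨⟨i, ⟨(v i).natDegree, hnd i⟩⟩,
      Polynomial.C_ne_zero.mpr (Polynomial.leadingCoeff_ne_zero.mpr hvi)⟩

private lemma comb_bwd {ι : Type*} [Fintype ι] (F : ι → ℂ → ℂ) (m : ι → ℕ)
    (w : (Σ i : ι, Fin (m i)) → Polynomial ℂ)
    (hw : ∀ ik, (w ik).degree < ((1:ℕ) : WithBot ℕ)) :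
    ∃ v : ι → Polynomial ℂ, (∀ i, (v i).degree < ((m i : ℕ) : WithBot ℕ)) ∧
      (∀ z, ∑ i, (v i).eval z * F i z
         = ∑ ik : Σ i : ι, Fin (m i), (w ik).eval z * (z ^ (ik.2 : ℕ) * F ik.1 z)) ∧
      ((∃ ik, w ik ≠ 0) → ∃ i, v i ≠ 0) := by
  have hwC : ∀ ik, w ik = Polynomial.C ((w ik).coeff 0) := by
    intro ik
    rcases eq_or_ne (w ik) 0 with h | h
    · simp [h]
    · have h0 : (w ik).natDegree = 0 := by
        have := (Polynomial.natDegree_lt_iff_degree_lt h).mpr (hw ik); omega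
      exact Polynomial.eq_C_of_natDegree_eq_zero h0
  refine ⟨fun i => ∑ k : Fin (m i), Polynomial.C ((w ⟨i, k⟩).coeff 0) * Polynomial.X ^ (k : ℕ),
    fun i => Polynomial.degree_sum_fin_lt _, ?_, ?_⟩
  · intro z
    rw [← Finset.univ_sigma_univ, Finset.sum_sigma]
    refine Finset.sum_congr rfl fun i _ => ?_
    rw [Polynomial.eval_finset_sum, Finset.sum_mul]
    refine Finset.sum_congr rfl fun k _ => ?_
    rw [hwC ⟨i, k⟩]
    simp [mul_assoc]
  · rintro ⟨⟨i, k⟩, hik⟩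
    refine ⟨i, fun h0 => hik ?_⟩
    have hc : (∑ j : Fin (m i), Polynomial.C ((w ⟨i, j⟩).coeff 0) * Polynomial.X ^ (j : ℕ)).coeff (k : ℕ)
        = (w ⟨i, k⟩).coeff 0 := by
      rw [Polynomial.finset_sum_coeff]
      have : ∀ j : Fin (m i), (Polynomial.C ((w ⟨i, j⟩).coeff 0) * Polynomial.X ^ (j : ℕ)).coeff (k : ℕ)
          = if j = k then (w ⟨i, j⟩).coeff 0 else 0 := by
        intro j
        rw [Polynomial.coeff_C_mul, Polynomial.coeff_X_pow]
        by_cases h : j = k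
        · simp [h]
        · have hne : (j : ℕ) ≠ (k : ℕ) := fun hh => h (Fin.ext hh)
          rw [if_neg (Ne.symm hne), if_neg h, mul_zero]
      rw [Finset.sum_congr rfl fun j _ => this j, Finset.sum_ite_eq' Finset.univ k
        (fun j => (w ⟨i, j⟩).coeff 0), if_pos (Finset.mem_univ k)]
    have h0' : (∑ j : Fin (m i), Polynomial.C ((w ⟨i, j⟩).coeff 0) * Polynomial.X ^ (j : ℕ)) = 0 := h0
    rw [h0'] at hc
    rw [hwC ⟨i, k⟩, ← hc]
    simp
private lemma prod_pow_zero_mem {P : Finset ℂ} (h0 : (0:ℂ) ∈ P) (po : ℂ → ℕ) (k : ℕ) (z : ℂ) :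
    (∏ ζ ∈ P, (z - ζ) ^ (if ζ = 0 then po ζ + k else po ζ))
      = (∏ ζ ∈ P, (z - ζ) ^ po ζ) * z ^ k := by
  have h : ∀ ζ ∈ P, (z - ζ) ^ (if ζ = 0 then po ζ + k else po ζ)
      = (z - ζ) ^ po ζ * (if ζ = 0 then z ^ k else 1) := by
    intro ζ _
    split_ifs with h
    · subst h; rw [sub_zero, pow_add]
    · rw [mul_one]
  rw [Finset.prod_congr rfl h, Finset.prod_mul_distrib,
    Finset.prod_ite_eq' P (0:ℂ) (fun _ => z ^ k), if_pos h0]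

private lemma diffOn_off_zero {D : Set ℂ} {H G : ℂ → ℂ} (k : ℕ)
    (h3 : DifferentiableOn ℂ H D)
    (hG : ∀ z : ℂ, z ≠ 0 → G z = H z / z ^ k)
    (h0 : (0:ℂ) ∈ D → DifferentiableWithinAt ℂ G D 0) :
    DifferentiableOn ℂ G D := by
  intro w hw
  rcases eq_or_ne w 0 with rfl | hw0
  · exact h0 hw
  · have h1 : DifferentiableWithinAt ℂ (fun z => H z / z ^ k) D w :=
      (h3 w hw).div ((differentiable_pow k).differentiableAt.differentiableWithinAt)
        (pow_ne_zero k hw0)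
    refine h1.congr_of_eventuallyEq ?_ (hG w hw0)
    filter_upwards [mem_nhdsWithin_of_mem_nhds (compl_singleton_mem_nhds hw0)] with z hz
    exact hG z hz
private lemma mero_div_same {E : Set ℂ} {Φ : ℂ → ℂ} {f : ℂ → ℂ} {k : ℕ} {r : ℝ≥0∞}
    {P : Finset ℂ} {po : ℂ → ℕ} {H : ℂ → ℂ}
    (hPD : ↑P ⊆ Dcan E Φ r \ E)
    (hpo : ∀ ζ ∈ P, 0 < po ζ)
    (hH : DifferentiableOn ℂ H (Dcan E Φ r))
    (hHne : ∀ ζ ∈ P, H ζ ≠ 0)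
    {U : Set ℂ} (hU : IsOpen U) (hEU : E ⊆ U)
    (heq : Set.EqOn (fun z => (∏ ζ ∈ P, (z - ζ) ^ po ζ) * (z ^ k * f z)) H U)
    (h0P : (0:ℂ) ∉ P) (h0E : (0:ℂ) ∉ E)
    (G : ℂ → ℂ) (hG : ∀ z : ℂ, z ≠ 0 → G z = H z / z ^ k)
    (hdiff0 : (0:ℂ) ∈ Dcan E Φ r → DifferentiableWithinAt ℂ G (Dcan E Φ r) 0) :
    MeroDataOn E Φ f r P po G := by
  have hPne : ∀ ζ ∈ P, ζ ≠ (0:ℂ) := fun ζ hζ h => h0P (h ▸ hζ)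
  refine ⟨hPD, hpo, diffOn_off_zero k hH hG hdiff0, ?_,
    U \ {0}, hU.sdiff isClosed_singleton,
    fun z hz => ⟨hEU hz, fun h => h0E (Set.mem_singleton_iff.mp h ▸ hz)⟩, ?_⟩
  · intro ζ hζ
    rw [hG ζ (hPne ζ hζ)]
    exact div_ne_zero (hHne ζ hζ) (pow_ne_zero _ (hPne ζ hζ))
  · rintro z ⟨hzU, hz0'⟩
    have hz0 : z ≠ 0 := by simpa using hz0'
    have h1 := heq hzU
    simp only at h1 ⊢
    rw [hG z hz0, ← h1, eq_div_iff (pow_ne_zero k hz0)]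
    ring
private lemma pole_div {E : Set ℂ} (hEc : IsCompact E) {Φ : ℂ → ℂ}
    (hΦd : DifferentiableOn ℂ Φ Eᶜ) {f : ℂ → ℂ} (hf : HoloNhd E f)
    (k : ℕ) {ξ : ℂ} {t : ℕ}
    (h : IsPoleOfExt E Φ (fun z => z ^ k * f z) ξ t) :
    IsPoleOfExt E Φ f ξ (if ξ = 0 then t + k else t) := by
  obtain ⟨ρ, hρ, P, po, H, ⟨hPD, hpo, hH, hHne, U, hU, hEU, heq⟩, hξP, hpoξ⟩ := h
  set D := Dcan E Φ (ENNReal.ofReal ρ) with hD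
  have hED : E ⊆ D := Set.subset_union_left
  by_cases h0P : (0:ℂ) ∈ P
  · -- 0 ∈ P : raise the order at 0 by k
    refine ⟨ρ, hρ, P, (fun ζ => if ζ = 0 then po ζ + k else po ζ), H,
      ⟨hPD, ?_, hH, hHne, U, hU, hEU, ?_⟩, hξP, ?_⟩
    · intro ζ hζ
      have := hpo ζ hζ
      dsimp only
      split_ifs <;> omega
    · intro z hz
      have h1 := heq hz
      simp only at h1 ⊢
      rw [prod_pow_zero_mem h0P po k z, ← h1]
      ring
    · dsimp only
      split_ifs with h <;> rw [hpoξ]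
  · -- 0 ∉ P
    have hPne : ∀ ζ ∈ P, ζ ≠ (0:ℂ) := fun ζ hζ h => h0P (h ▸ hζ)
    have hξ0 : ξ ≠ 0 := hPne ξ hξP
    rw [if_neg hξ0]
    by_cases h0E : (0:ℂ) ∈ E
    · -- 0 ∈ E : use holomorphy of f near E
      obtain ⟨W, hW, hEW, hfW⟩ := hf
      set G : ℂ → ℂ := fun z => if z = 0 then (∏ ζ ∈ P, ((0:ℂ) - ζ) ^ po ζ) * f 0
        else H z / z ^ k with hGdef
      have hG : ∀ z : ℂ, z ≠ 0 → G z = H z / z ^ k := fun z hz => by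
        rw [hGdef]; simp only [if_neg hz]
      have hProdDiff : ∀ x : ℂ, DifferentiableAt ℂ (fun z => ∏ ζ ∈ P, (z - ζ) ^ po ζ) x := by
        intro x
        exact DifferentiableAt.fun_finsetProd fun ζ _ =>
          ((differentiableAt_id.sub_const ζ).pow _)
      have hEqG : ∀ z ∈ U ∩ W, (∏ ζ ∈ P, (z - ζ) ^ po ζ) * f z = G z := by
        rintro z ⟨hzU, hzW⟩
        rcases eq_or_ne z 0 with rfl | hz0
        · rw [hGdef]; simp
        · rw [hG z hz0, eq_div_iff (pow_ne_zero k hz0), ← heq hzU]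
          ring
      have hmodel : G =ᶠ[𝓝 0] fun z => (∏ ζ ∈ P, (z - ζ) ^ po ζ) * f z := by
        filter_upwards [(hU.inter hW).mem_nhds ⟨hEU h0E, hEW h0E⟩] with z hz
        exact (hEqG z hz).symm
      have hdiff0 : DifferentiableAt ℂ G 0 := by
        rw [hmodel.differentiableAt_iff]
        exact (hProdDiff 0).mul (hfW.differentiableAt (hW.mem_nhds (hEW h0E)))
      refine ⟨ρ, hρ, P, po, G,
        ⟨hPD, hpo, diffOn_off_zero k hH hG (fun _ => hdiff0.differentiableWithinAt), ?_,
          U ∩ W, hU.inter hW, fun z hz => ⟨hEU hz, hEW hz⟩, fun z hz => hEqG z hz⟩,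
        hξP, hpoξ⟩
      intro ζ hζ
      have hζ0 : ζ ≠ 0 := fun hh => (hPD hζ).2 (hh ▸ h0E)
      rw [hG ζ hζ0]
      exact div_ne_zero (hHne ζ hζ) (pow_ne_zero _ hζ0)
    · -- 0 ∉ E
      by_cases h0D : (0:ℂ) ∈ D
      · -- 0 ∈ D \ E : analyze the order of vanishing of H at 0
        have hρ0 : (0:ℝ) < ρ := lt_trans one_pos hρ
        set O : Set ℂ := Eᶜ ∩ Φ ⁻¹' {w : ℂ | ‖w‖ < ρ} with hOdef
        have hOopen : IsOpen O :=
          hΦd.continuousOn.isOpen_inter_preimage hEc.isClosed.isOpen_compl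
            (isOpen_lt continuous_norm continuous_const)
        have hOD : O ⊆ D := fun z hz =>
          Or.inr ⟨hz.1, (ENNReal.ofReal_lt_ofReal_iff hρ0).mpr hz.2⟩
        have h0O : (0:ℂ) ∈ O := by
          rcases h0D with h | ⟨h1, h2⟩
          · exact absurd h h0E
          · exact ⟨h1, (ENNReal.ofReal_lt_ofReal_iff hρ0).mp h2⟩
        have hDnhds : D ∈ 𝓝 (0:ℂ) := Filter.mem_of_superset (hOopen.mem_nhds h0O) hOD
        have hA : AnalyticAt ℂ H 0 := hH.analyticAt hDnhds
        rcases eq_or_ne (analyticOrderAt H 0) ⊤ with ho | ho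
        · -- H ≡ 0 near 0
          have hHtop : ∀ᶠ z in 𝓝 (0:ℂ), H z = 0 := analyticOrderAt_eq_top.mp ho
          set G : ℂ → ℂ := fun z => if z = 0 then 0 else H z / z ^ k with hGdef
          have hG : ∀ z : ℂ, z ≠ 0 → G z = H z / z ^ k := fun z hz => by
            rw [hGdef]; simp only [if_neg hz]
          have hmodel : G =ᶠ[𝓝 0] fun _ => (0:ℂ) := by
            filter_upwards [hHtop] with z hz
            rcases eq_or_ne z 0 with rfl | hz0
            · rw [hGdef]; simp
            · rw [hG z hz0, hz, zero_div]
          have hdiff0 : DifferentiableAt ℂ G 0 := by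
            rw [hmodel.differentiableAt_iff]; exact differentiableAt_const 0
          exact ⟨ρ, hρ, P, po, G,
            mero_div_same hPD hpo hH hHne hU hEU heq h0P h0E G hG
              (fun _ => hdiff0.differentiableWithinAt), hξP, hpoξ⟩
        · obtain ⟨n, hn⟩ := WithTop.ne_top_iff_exists.mp ho
          obtain ⟨g, hg, hg0, hgev⟩ := hA.analyticOrderAt_eq_natCast.mp hn.symm
          by_cases hnk : k ≤ n
          · -- order at least k : divide cleanly
            set G : ℂ → ℂ := fun z => if z = 0 then (0:ℂ) ^ (n - k) * g 0
              else H z / z ^ k with hGdef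
            have hG : ∀ z : ℂ, z ≠ 0 → G z = H z / z ^ k := fun z hz => by
              rw [hGdef]; simp only [if_neg hz]
            have hmodel : G =ᶠ[𝓝 0] fun z => z ^ (n - k) * g z := by
              filter_upwards [hgev] with z hz
              rcases eq_or_ne z 0 with rfl | hz0
              · rw [hGdef]; simp
              · rw [hG z hz0, hz, smul_eq_mul, sub_zero,
                  show n = k + (n - k) by omega, pow_add, mul_assoc,
                  mul_div_cancel_left₀ _ (pow_ne_zero k hz0), Nat.add_sub_cancel_left]
            have hdiff0 : DifferentiableAt ℂ G 0 := by
              rw [hmodel.differentiableAt_iff]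
              exact (differentiable_pow (n - k)).differentiableAt.mul hg.differentiableAt
            exact ⟨ρ, hρ, P, po, G,
              mero_div_same hPD hpo hH hHne hU hEU heq h0P h0E G hG
                (fun _ => hdiff0.differentiableWithinAt), hξP, hpoξ⟩
          · -- order n < k : f acquires a pole at 0 of order k - n
            set G : ℂ → ℂ := fun z => if z = 0 then g 0 else H z / z ^ n with hGdef
            have hG : ∀ z : ℂ, z ≠ 0 → G z = H z / z ^ n := fun z hz => by
              rw [hGdef]; simp only [if_neg hz]
            have hmodel : G =ᶠ[𝓝 0] g := by
              filter_upwards [hgev] with z hz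
              rcases eq_or_ne z 0 with rfl | hz0
              · rw [hGdef]; simp
              · rw [hG z hz0, hz, smul_eq_mul, sub_zero,
                  mul_div_cancel_left₀ _ (pow_ne_zero n hz0)]
            have hdiff0 : DifferentiableAt ℂ G 0 := by
              rw [hmodel.differentiableAt_iff]; exact hg.differentiableAt
            refine ⟨ρ, hρ, insert (0:ℂ) P, (fun ζ => if ζ = 0 then k - n else po ζ), G,
              ⟨?_, ?_, diffOn_off_zero n hH hG (fun _ => hdiff0.differentiableWithinAt), ?_,
                U \ {0}, hU.sdiff isClosed_singleton,
                fun z hz => ⟨hEU hz, fun hh => h0E (Set.mem_singleton_iff.mp hh ▸ hz)⟩, ?_⟩,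
              Finset.mem_insert_of_mem hξP, by dsimp only; rw [if_neg hξ0, hpoξ]⟩
            · rw [Finset.coe_insert, Set.insert_subset_iff]
              exact ⟨⟨h0D, h0E⟩, hPD⟩
            · intro ζ hζ
              dsimp only
              rcases Finset.mem_insert.mp hζ with rfl | hζP
              · rw [if_pos rfl]; omega
              · rw [if_neg (hPne ζ hζP)]; exact hpo ζ hζP
            · intro ζ hζ
              rcases Finset.mem_insert.mp hζ with rfl | hζP
              · rw [hGdef]; simpa using hg0
              · rw [hG ζ (hPne ζ hζP)]
                exact div_ne_zero (hHne ζ hζP) (pow_ne_zero _ (hPne ζ hζP))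
            · rintro z ⟨hzU, hz0'⟩
              have hz0 : z ≠ 0 := by simpa using hz0'
              have h1 := heq hzU
              simp only at h1 ⊢
              rw [Finset.prod_insert h0P]
              rw [if_pos rfl,
                Finset.prod_congr rfl (fun ζ hζ => by rw [if_neg (hPne ζ hζ)]),
                hG z hz0, eq_div_iff (pow_ne_zero n hz0), ← h1]
              have hzz : z ^ (k - n) * z ^ n = z ^ k := by
                rw [← pow_add]; congr 1; omega
              calc (z - 0) ^ (k - n) * (∏ ζ ∈ P, (z - ζ) ^ po ζ) * f z * z ^ n
                  = (∏ ζ ∈ P, (z - ζ) ^ po ζ) * (z ^ (k - n) * z ^ n * f z) := by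
                    rw [sub_zero]; ring
                _ = (∏ ζ ∈ P, (z - ζ) ^ po ζ) * (z ^ k * f z) := by rw [hzz]
      · -- 0 ∉ D
        have h0E' : (0:ℂ) ∉ E := h0E
        set G : ℂ → ℂ := fun z => if z = 0 then 0 else H z / z ^ k with hGdef
        have hG : ∀ z : ℂ, z ≠ 0 → G z = H z / z ^ k := fun z hz => by
          rw [hGdef]; simp only [if_neg hz]
        exact ⟨ρ, hρ, P, po, G,
          mero_div_same hPD hpo hH hHne hU hEU heq h0P h0E' G hG
            (fun hh => absurd hh h0D), hξP, hpoξ⟩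

/-- Lemma 3.5 (reduction of `F, m` to `F̄, m̄ = (1,…,1)`). -/
theorem stmt_8 {ι : Type*} [Fintype ι] (E : Set ℂ) (hEc : IsCompact E)
    (hEinf : E.Infinite)
    (hEsc : SimplyConnectedSpace ↥((((↑) : ℂ → OnePoint ℂ) '' E)ᶜ))
    (μ : Measure ℂ) (hμ : MeasClass E μ)
    (p : ℕ → Polynomial ℂ) (hp : IsONPolys μ p)
    (Φ : ℂ → ℂ) (hΦ : IsExtConfMap E Φ)
    (F : ι → ℂ → ℂ) (hF : ∀ i, HoloNhd E (F i))
    (m : ι → ℕ) (hm : ∀ i, 1 ≤ m i) :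
    letI Fbar : (Σ i : ι, Fin (m i)) → ℂ → ℂ := fun ik z => z ^ (ik.2 : ℕ) * F ik.1 z
    letI mbar : (Σ i : ι, Fin (m i)) → ℕ := fun _ => 1
    (PolyIndep E F m ↔ PolyIndep E Fbar mbar) ∧
    (∀ (ξ : ℂ) (τ : ℕ), VecPoleOrd E Φ F ξ τ ↔ VecPoleOrd E Φ Fbar ξ τ) ∧
    (∀ k : ℕ, vecRhoM E Φ F k = vecRhoM E Φ Fbar k) ∧
    (∀ (n : ℕ) (Q : Polynomial ℂ),
      IsHPDenom μ p F m n Q ↔ IsHPDenom μ p Fbar mbar n Q) ∧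
    (∀ (ξ : ℂ) (τ : ℕ),
      IsSystemPoleOrd E Φ F m ξ τ ↔ IsSystemPoleOrd E Φ Fbar mbar ξ τ) := by
  refine ⟨?_, ?_, ?_, ?_, ?_⟩
  · -- (i)
    constructor
    · intro h
      rintro ⟨w, hw1, hwne, q, U, hU, hEU, heq⟩
      obtain ⟨v, hv1, hv2, hv3⟩ := comb_bwd F m w (fun ik => hw1 ik)
      exact h ⟨v, hv1, hv3 hwne, q, U, hU, hEU, fun z hz => (hv2 z).trans (heq hz)⟩
    · intro h
      rintro ⟨v, hv1, hvne, q, U, hU, hEU, heq⟩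
      obtain ⟨w, hw1, hw2, hw3⟩ := comb_fwd F m hm v hv1
      exact h ⟨w, hw1, hw3 hvne, q, U, hU, hEU, fun z hz => (hw2 z).trans (heq hz)⟩
  · -- (ii)
    intro ξ τ
    constructor
    · rintro ⟨⟨i, hA⟩, hbd⟩
      constructor
      · exact ⟨⟨i, ⟨0, hm i⟩⟩, by simpa using hA⟩
      · rintro ⟨j, kk⟩ t hB
        have h1 := pole_div hEc hΦ.1 (hF j) (kk : ℕ) hB
        have h2 := hbd j _ h1
        split_ifs at h2 <;> omega
    · rintro ⟨⟨⟨i, kk⟩, hB⟩, hbd⟩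
      have hA' := pole_div hEc hΦ.1 (hF i) (kk : ℕ) hB
      have hb : (if ξ = 0 then τ + (kk : ℕ) else τ) ≤ τ := by
        apply hbd ⟨i, ⟨0, hm i⟩⟩
        simpa using hA'
      have hττ : (if ξ = 0 then τ + (kk : ℕ) else τ) = τ := by
        split_ifs at hb ⊢ <;> omega
      rw [hττ] at hA'
      refine ⟨⟨i, hA'⟩, ?_⟩
      intro j t hAj
      exact hbd ⟨j, ⟨0, hm j⟩⟩ t (by simpa using hAj)
  · -- (iii)
    intro k
    unfold vecRhoM
    congr 1
    ext r
    constructor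
    · rintro ⟨ρ, h1, h2, q, hq, hdeg, hext⟩
      refine ⟨ρ, h1, h2, q, hq, hdeg, ?_⟩
      rintro ⟨i, j⟩
      obtain ⟨g, hg, U, hU, hEU, heq⟩ := hext i
      refine ⟨fun z => z ^ (j : ℕ) * g z, ((differentiable_pow _).differentiableOn).mul hg,
        U, hU, hEU, fun z hz => ?_⟩
      have := heq hz
      simp only at this ⊢
      rw [← this]; ring
    · rintro ⟨ρ, h1, h2, q, hq, hdeg, hext⟩
      refine ⟨ρ, h1, h2, q, hq, hdeg, ?_⟩
      intro i
      obtain ⟨g, hg, U, hU, hEU, heq⟩ := hext ⟨i, ⟨0, hm i⟩⟩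
      refine ⟨g, hg, U, hU, hEU, fun z hz => ?_⟩
      have := heq hz
      simpa using this
  · -- (iv)
    intro n Q
    constructor
    · rintro ⟨h1, h2, h3⟩
      refine ⟨h1, ?_, ?_⟩
      · simpa using h2
      · rintro ⟨i, kk⟩ j hj
        interval_cases j
        have h4 := h3 i (kk : ℕ) kk.isLt
        have hfun : (fun z => Q.eval z * z ^ (0:ℕ) * (z ^ (kk : ℕ) * F i z))
            = fun z => Q.eval z * z ^ (kk : ℕ) * F i z := by funext z; ring
        simp only at h4 ⊢
        rw [hfun]
        exact h4
    · rintro ⟨h1, h2, h3⟩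
      refine ⟨h1, by simpa using h2, ?_⟩
      intro i k hk
      have h4 := h3 ⟨i, ⟨k, hk⟩⟩ 0 zero_lt_one
      have hfun : (fun z => Q.eval z * z ^ (0:ℕ) * (z ^ ((⟨k, hk⟩ : Fin (m i)) : ℕ) * F i z))
          = fun z => Q.eval z * z ^ k * F i z := by
        funext z; simp only [Fin.val_mk, pow_zero]; ring
      simp only at h4 ⊢
      rw [hfun] at h4
      exact h4
  · -- (v)
    have hcomb : ∀ g, IsCombExt E F m g ↔
        IsCombExt E (fun (ik : Σ i : ι, Fin (m i)) z => z ^ (ik.2 : ℕ) * F ik.1 z)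
          (fun _ => 1) g := by
      intro g
      constructor
      · rintro ⟨v, hv1, U, hU, hEU, heq⟩
        obtain ⟨w, hw1, hw2, _⟩ := comb_fwd F m hm v hv1
        exact ⟨w, hw1, U, hU, hEU, fun z hz => (hw2 z).trans (heq hz)⟩
      · rintro ⟨w, hw1, U, hU, hEU, heq⟩
        obtain ⟨v, hv1, hv2, _⟩ := comb_bwd F m w (fun ik => hw1 ik)
        exact ⟨v, hv1, U, hU, hEU, fun z hz => (hv2 z).trans (heq hz)⟩
    intro ξ τ
    have hsys : ∀ τ', SysAll E Φ F m ξ τ' ↔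
        SysAll E Φ (fun (ik : Σ i : ι, Fin (m i)) z => z ^ (ik.2 : ℕ) * F ik.1 z)
          (fun _ => 1) ξ τ' := by
      intro τ'
      constructor <;> intro h t h1 h2 <;> obtain ⟨g, hg1, hg2⟩ := h t h1 h2
      exacts [⟨g, (hcomb g).mp hg1, hg2⟩, ⟨g, (hcomb g).mpr hg1, hg2⟩]
    unfold IsSystemPoleOrd
    rw [hsys τ, hsys (τ + 1)]

end
end

section
/- Let F = (F₁,…,F_d) ∈ H(E)^d, μ ∈ M(E), and fix a multi-index m = (m₁,…,m_d) ∈ ℕ^d. Suppose there is n₀ such that for every n ≥ n₀ the denominator Q^μ_{n,|m|} of the (n,m) orthogonal Hermite–Padé approximant of F is unique and deg Q^μ_{n,|m|} = |m|. Then F is polynomially independent with respect to m. -/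
open Complex MeasureTheory Polynomial Set Filter Topology
open scoped ENNReal

noncomputable section

-- complement of measSupport is null
lemma ae_mem_measSupport (μ : Measure ℂ) : ∀ᵐ z ∂μ, z ∈ measSupport μ := by
  rw [MeasureTheory.ae_iff]
  apply measure_null_of_locally_null
  intro x hx
  simp only [mem_setOf_eq, measSupport, not_forall] at hx
  obtain ⟨U, hU, hU0⟩ := hx
  push_neg at hU0
  exact ⟨U, mem_nhdsWithin_of_mem_nhds hU, hU0⟩

lemma measSupport_isClosed (μ : Measure ℂ) : IsClosed (measSupport μ) := by
  rw [← isOpen_compl_iff, isOpen_iff_mem_nhds]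
  intro x hx
  simp only [mem_compl_iff, mem_setOf_eq, measSupport, not_forall] at hx
  obtain ⟨U, hU, hU0⟩ := hx
  push_neg at hU0
  obtain ⟨V, hVU, hVo, hxV⟩ := mem_nhds_iff.1 hU
  refine Filter.mem_of_superset (hVo.mem_nhds hxV) ?_
  intro y hy hmem
  exact hmem V (hVo.mem_nhds hy) (measure_mono_null hVU hU0)

def NiceOn (E : Set ℂ) (f : ℂ → ℂ) : Prop := ∃ V, IsOpen V ∧ E ⊆ V ∧ ContinuousOn f V

lemma NiceOn.mul {E : Set ℂ} {f g : ℂ → ℂ} (hf : NiceOn E f) (hg : NiceOn E g) :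
    NiceOn E (fun z => f z * g z) := by
  obtain ⟨V, hVo, hEV, hfc⟩ := hf
  obtain ⟨W, hWo, hEW, hgc⟩ := hg
  exact ⟨V ∩ W, hVo.inter hWo, subset_inter hEV hEW,
    (hfc.mono inter_subset_left).mul (hgc.mono inter_subset_right)⟩

lemma Continuous.niceOn {E : Set ℂ} {f : ℂ → ℂ} (hf : Continuous f) : NiceOn E f :=
  ⟨univ, isOpen_univ, subset_univ _, hf.continuousOn⟩

lemma NiceOn.integrable {E : Set ℂ} {f : ℂ → ℂ} {μ : Measure ℂ} [IsFiniteMeasure μ]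
    (hEc : IsCompact E) (hsupp : measSupport μ ⊆ E) (hf : NiceOn E f) :
    Integrable f μ := by
  obtain ⟨V, hVo, hEV, hfc⟩ := hf
  have haeV : ∀ᵐ z ∂μ, z ∈ V := (ae_mem_measSupport μ).mono (fun z hz => hEV (hsupp hz))
  have hres : μ.restrict V = μ := Measure.restrict_eq_self_of_ae_mem haeV
  have hmeas : AEStronglyMeasurable f μ := hres ▸ hfc.aestronglyMeasurable hVo.measurableSet
  have hKc : IsCompact (measSupport μ) := hEc.of_isClosed_subset (measSupport_isClosed μ) hsupp
  obtain ⟨C, hC⟩ := hKc.exists_bound_of_continuousOn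
    (hfc.mono (fun z hz => hEV (hsupp hz)))
  refine Integrable.mono' (integrable_const C) hmeas ?_
  filter_upwards [ae_mem_measSupport μ] with z hz using hC z hz

lemma mInner_add {μ : Measure ℂ} {f g h : ℂ → ℂ}
    (hf : Integrable (fun z => f z * (starRingEnd ℂ) (h z)) μ)
    (hg : Integrable (fun z => g z * (starRingEnd ℂ) (h z)) μ) :
    mInner μ (fun z => f z + g z) h = mInner μ f h + mInner μ g h := by
  unfold mInner
  simp_rw [add_mul]
  exact integral_add hf hg

lemma mInner_smul (μ : Measure ℂ) (c : ℂ) (f h : ℂ → ℂ) :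
    mInner μ (fun z => c * f z) h = c * mInner μ f h := by
  unfold mInner
  have : (fun z => (c * f z) * (starRingEnd ℂ) (h z))
      = fun z => c • (f z * (starRingEnd ℂ) (h z)) := by
    funext z; simp [smul_eq_mul, mul_assoc]
  rw [this, integral_smul, smul_eq_mul]

lemma mInner_sum {α : Type*} (μ : Measure ℂ) (s : Finset α) (f : α → ℂ → ℂ) (h : ℂ → ℂ)
    (hint : ∀ a ∈ s, Integrable (fun z => f a z * (starRingEnd ℂ) (h z)) μ) :
    mInner μ (fun z => ∑ a ∈ s, f a z) h = ∑ a ∈ s, mInner μ (f a) h := by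
  unfold mInner
  simp_rw [Finset.sum_mul]
  exact integral_finset_sum s hint

lemma poly_nice {E : Set ℂ} (R : Polynomial ℂ) : NiceOn E (fun z => R.eval z) :=
  (Polynomial.continuous_aeval R).niceOn

lemma polyconj_integrable {E : Set ℂ} {μ : Measure ℂ} [IsFiniteMeasure μ]
    (hEc : IsCompact E) (hsupp : measSupport μ ⊆ E) (R S : Polynomial ℂ) :
    Integrable (fun z => R.eval z * (starRingEnd ℂ) (S.eval z)) μ :=
  NiceOn.integrable hEc hsupp
    ((poly_nice R).mul ((Complex.continuous_conj.comp (Polynomial.continuous_aeval S)).niceOn))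

lemma orth_low {E : Set ℂ} {μ : Measure ℂ} {p : ℕ → Polynomial ℂ} [IsFiniteMeasure μ]
    (hEc : IsCompact E) (hsupp : measSupport μ ⊆ E) (hp : IsONPolys μ p) {n : ℕ} :
    ∀ R : Polynomial ℂ, R.natDegree < n →
      mInner μ (fun z => R.eval z) (fun z => (p n).eval z) = 0 := by
  suffices H : ∀ d, ∀ R : Polynomial ℂ, R.natDegree = d → R.natDegree < n →
      mInner μ (fun z => R.eval z) (fun z => (p n).eval z) = 0 by
    exact fun R hR => H _ R rfl hR
  intro d
  induction d using Nat.strong_induction_on with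
  | _ d IH =>
    intro R hd hn
    by_cases hR0 : R = 0
    · simp [mInner, hR0]
    have hpd : (p d).natDegree = d := hp.1 d
    obtain ⟨κ, hκpos, hκ⟩ := hp.2.1 d
    have hκ0 : (p d).leadingCoeff ≠ 0 := by
      rw [hκ]; exact_mod_cast ne_of_gt hκpos
    have hRl0 : R.leadingCoeff ≠ 0 := Polynomial.leadingCoeff_ne_zero.2 hR0
    set c := R.leadingCoeff / (p d).leadingCoeff with hc
    have hc0 : c ≠ 0 := div_ne_zero hRl0 hκ0
    set Rc := Polynomial.C c * p d with hRc
    have hdegR : R.degree = (d : WithBot ℕ) := hd ▸ Polynomial.degree_eq_natDegree hR0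
    have hpd0 : p d ≠ 0 := fun h => hκ0 (by simp [h])
    have hdegRc : Rc.degree = (d : WithBot ℕ) := by
      rw [hRc, Polynomial.degree_mul, Polynomial.degree_C hc0, zero_add,
        Polynomial.degree_eq_natDegree hpd0, hpd]
    have hlc : Rc.leadingCoeff = R.leadingCoeff := by
      rw [hRc, Polynomial.leadingCoeff_mul, Polynomial.leadingCoeff_C, hc,
        div_mul_cancel₀ _ hκ0]
    have hsub : (R - Rc).degree < R.degree :=
      Polynomial.degree_sub_lt (hdegR.trans hdegRc.symm) hR0 hlc.symm
    have hsplit : (fun z => R.eval z)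
        = fun z => (R - Rc).eval z + Rc.eval z := by
      funext z
      simp [Polynomial.eval_sub]
    have hRcval : mInner μ (fun z => Rc.eval z) (fun z => (p n).eval z) = 0 := by
      have : (fun z => Rc.eval z) = fun z => c * (p d).eval z := by
        funext z; simp [hRc]
      rw [this, mInner_smul, hp.2.2 d n, if_neg (by omega), mul_zero]
    have hRrest : mInner μ (fun z => (R - Rc).eval z) (fun z => (p n).eval z) = 0 := by
      by_cases h0 : R - Rc = 0
      · simp [mInner, h0]
      · have hlt : (R - Rc).natDegree < d := by
          have := Polynomial.natDegree_lt_natDegree h0 hsub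
          omega
        exact IH _ hlt _ rfl (by omega)
    rw [hsplit, mInner_add (polyconj_integrable hEc hsupp _ _)
      (polyconj_integrable hEc hsupp _ _), hRrest, hRcval, add_zero]

/-- Lemma 3.6 : uniqueness and full degree of the denominators imply
polynomial independence. -/
theorem stmt_9 {ι : Type*} [Fintype ι] (E : Set ℂ) (hEc : IsCompact E)
    (hEinf : E.Infinite)
    (hEsc : SimplyConnectedSpace ↥((((↑) : ℂ → OnePoint ℂ) '' E)ᶜ))
    (μ : Measure ℂ) (hμ : MeasClass E μ)
    (p : ℕ → Polynomial ℂ) (hp : IsONPolys μ p)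
    (F : ι → ℂ → ℂ) (hF : ∀ i, HoloNhd E (F i))
    (m : ι → ℕ) (hm : ∀ i, 1 ≤ m i) (n₀ : ℕ)
    (huniq : ∀ n ≥ n₀, ∃! Q : Polynomial ℂ, IsHPDenom μ p F m n Q)
    (hdeg : ∀ n ≥ n₀, ∀ Q : Polynomial ℂ, IsHPDenom μ p F m n Q →
      Q.natDegree = ∑ i, m i) :
    PolyIndep E F m := by
  classical
  rintro ⟨v, hvdeg, ⟨i₀, hvi₀⟩, q, U, hUo, hEU, hUeq⟩
  haveI : IsFiniteMeasure μ := hμ.1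
  have hsupp : measSupport μ ⊆ E := hμ.2.1
  set N := ∑ i, m i with hN
  set n := max n₀ (N + q.natDegree + 1) with hn
  have hnn₀ : n ≥ n₀ := le_max_left _ _
  have hnbig : N + q.natDegree < n := lt_of_lt_of_le (Nat.lt_succ_self _) (le_max_right _ _)
  obtain ⟨Q, hQ, hQuniq⟩ := huniq n hnn₀
  have hQdeg : Q.natDegree = N := hdeg n hnn₀ Q hQ
  have hcard : Fintype.card (Σ i, Fin (m i)) = N := by
    simp [Fintype.card_sigma, hN]
  let e : (Σ i, Fin (m i)) ≃ Fin N := Fintype.equivFinOfCardEq hcard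
  -- integrability helpers
  have hFnice : ∀ i, NiceOn E (F i) := by
    intro i; obtain ⟨V, hVo, hEV, hd⟩ := hF i
    exact ⟨V, hVo, hEV, hd.continuousOn⟩
  have hint2 : ∀ g : ℂ → ℂ, NiceOn E g →
      Integrable (fun z => g z * (starRingEnd ℂ) ((p n).eval z)) μ := by
    intro g hg
    exact NiceOn.integrable hEc hsupp
      (hg.mul ((Complex.continuous_conj.comp (Polynomial.continuous_aeval (p n))).niceOn))
  have hintc : ∀ (c : ℂ) (g : ℂ → ℂ), NiceOn E g →
      Integrable (fun z => (c * g z) * (starRingEnd ℂ) ((p n).eval z)) μ := by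
    intro c g hg
    simpa [mul_assoc] using (hint2 g hg).const_mul c
  have hnpow : ∀ k : ℕ, NiceOn E (fun z : ℂ => z ^ k) := fun k => (continuous_pow k).niceOn
  have hintRF : ∀ (R : Polynomial ℂ) (i : ι) (k : ℕ),
      Integrable (fun z => R.eval z * z ^ k * F i z * (starRingEnd ℂ) ((p n).eval z)) μ :=
    fun R i k => hint2 _ (((poly_nice R).mul (hnpow k)).mul (hFnice i))
  -- polynomial from a coefficient vector
  set Sa : ((Σ i, Fin (m i)) → ℂ) → Polynomial ℂ :=
    fun a => ∑ j, Polynomial.C (a j) * Polynomial.X ^ (e j : ℕ) with hSa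
  have hSadeg : ∀ a, (Sa a).degree < (N : WithBot ℕ) := by
    intro a
    refine lt_of_le_of_lt (Polynomial.degree_sum_le _ _) ?_
    rw [Finset.sup_lt_iff (by exact_mod_cast WithBot.bot_lt_coe N)]
    intro j _
    refine lt_of_le_of_lt (Polynomial.degree_C_mul_X_pow_le _ _) ?_
    exact_mod_cast (e j).2
  have hSanat : ∀ a, (Sa a).natDegree ≤ N :=
    fun a => Polynomial.natDegree_le_iff_degree_le.2 (hSadeg a).le
  have hSacoeff : ∀ a j, (Sa a).coeff (e j : ℕ) = a j := by
    intro a j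
    rw [hSa, Polynomial.finset_sum_coeff]
    rw [Finset.sum_eq_single j]
    · simp [Polynomial.coeff_C_mul, Polynomial.coeff_X_pow]
    · intro j' _ hj'
      have hne : ((e j : ℕ)) ≠ ((e j' : ℕ)) :=
        fun h => hj' ((e.injective (Fin.val_injective h)).symm)
      simp [Polynomial.coeff_C_mul, Polynomial.coeff_X_pow, hne]
    · intro h; exact absurd (Finset.mem_univ j) h
  have hSaeval : ∀ a z, (Sa a).eval z = ∑ j, a j * z ^ (e j : ℕ) := by
    intro a z
    rw [hSa, Polynomial.eval_finset_sum]
    simp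
  -- the matrix
  set M : Matrix (Σ i, Fin (m i)) (Σ i, Fin (m i)) ℂ :=
    (fun j j' => mInner μ (fun z => z ^ (e j' : ℕ) * z ^ (j.2 : ℕ) * F j.1 z)
      (fun z => (p n).eval z)) with hM
  have key : ∀ (a : (Σ i, Fin (m i)) → ℂ) (j : Σ i, Fin (m i)),
      mInner μ (fun z => (Sa a).eval z * z ^ (j.2 : ℕ) * F j.1 z)
        (fun z => (p n).eval z) = M.mulVec a j := by
    intro a j
    have hre : (fun z => (Sa a).eval z * z ^ (j.2 : ℕ) * F j.1 z)
        = fun z => ∑ j', a j' * (z ^ (e j' : ℕ) * z ^ (j.2 : ℕ) * F j.1 z) := by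
      funext z
      rw [hSaeval, Finset.sum_mul, Finset.sum_mul]
      exact Finset.sum_congr rfl fun j' _ => by ring
    rw [hre, mInner_sum μ _ _ _ (fun j' _ =>
      hintc (a j') _ (((hnpow _).mul (hnpow _)).mul (hFnice _)))]
    simp only [mInner_smul]
    rw [Matrix.mulVec, hM]
    simp only [dotProduct]
    exact Finset.sum_congr rfl fun j' _ => mul_comm _ _
  -- injectivity of the matrix
  have hker : ∀ a, M.mulVec a = 0 → a = 0 := by
    intro a ha
    have hQS : IsHPDenom μ p F m n (Q + Sa a) := by
      refine ⟨?_, ?_, ?_⟩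
      · refine hQ.1.add_of_left ?_
        rw [Polynomial.degree_eq_natDegree hQ.1.ne_zero, hQdeg]
        exact hSadeg a
      · exact le_trans (Polynomial.natDegree_add_le _ _)
          (max_le hQdeg.le (hSanat a))
      · intro i k hk
        have hre : (fun z => (Q + Sa a).eval z * z ^ k * F i z)
            = fun z => Q.eval z * z ^ k * F i z + (Sa a).eval z * z ^ k * F i z := by
          funext z; simp only [Polynomial.eval_add]; ring
        rw [hre, mInner_add (hintRF Q i k) (hintRF (Sa a) i k), hQ.2.2 i k hk,
          key a ⟨i, ⟨k, hk⟩⟩, ha]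
        simp
    have hQQS : Q + Sa a = Q := hQuniq _ hQS
    have hS0 : Sa a = 0 := by rwa [add_eq_left] at hQQS
    funext j
    have := hSacoeff a j
    rw [hS0] at this
    simpa using this.symm
  have hinj : Function.Injective (Matrix.mulVecLin M) := by
    rw [← LinearMap.ker_eq_bot]
    rw [Submodule.eq_bot_iff]
    intro a ha
    exact hker a (by simpa [Matrix.mulVecLin_apply] using ha)
  have hsurj : Function.Surjective (Matrix.mulVecLin M) :=
    LinearMap.injective_iff_surjective.1 hinj
  -- the relation vector
  have hvnat : ∀ i, (v i).natDegree < m i := by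
    intro i
    by_cases h : v i = 0
    · simp only [h, Polynomial.natDegree_zero]
      exact lt_of_lt_of_le Nat.zero_lt_one (hm i)
    · exact (Polynomial.natDegree_lt_iff_degree_lt h).2 (hvdeg i)
  set w : (Σ i, Fin (m i)) → ℂ := fun j => (v j.1).coeff (j.2 : ℕ) with hw
  set j₀ : Σ i, Fin (m i) := ⟨i₀, ⟨(v i₀).natDegree, hvnat i₀⟩⟩ with hj₀
  have hwj₀ : w j₀ ≠ 0 := by
    rw [hw]
    exact Polynomial.leadingCoeff_ne_zero.2 hvi₀
  -- the key relation
  have hrel : ∀ a : (Σ i, Fin (m i)) → ℂ, ∑ j, w j * M.mulVec a j = 0 := by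
    intro a
    have h1 : ∑ j, w j * M.mulVec a j
        = ∑ j : (Σ i, Fin (m i)), w j * mInner μ
            (fun z => (Sa a).eval z * z ^ (j.2 : ℕ) * F j.1 z)
            (fun z => (p n).eval z) := by
      exact Finset.sum_congr rfl fun j _ => by rw [key a j]
    rw [h1, ← Finset.univ_sigma_univ, Finset.sum_sigma]
    have h2 : ∀ i : ι, ∑ k : Fin (m i), (v i).coeff (k : ℕ) * mInner μ
          (fun z => (Sa a).eval z * z ^ (k : ℕ) * F i z) (fun z => (p n).eval z)
        = mInner μ (fun z => (Sa a).eval z * (v i).eval z * F i z)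
            (fun z => (p n).eval z) := by
      intro i
      have hre : (fun z => (Sa a).eval z * (v i).eval z * F i z)
          = fun z => ∑ k : Fin (m i),
              (v i).coeff (k : ℕ) * ((Sa a).eval z * z ^ (k : ℕ) * F i z) := by
        funext z
        rw [Polynomial.eval_eq_sum_range' (hvnat i), Fin.sum_univ_eq_sum_range
          (fun k => (v i).coeff k * ((Sa a).eval z * z ^ k * F i z)) (m i)]
        rw [Finset.mul_sum, Finset.sum_mul]
        exact Finset.sum_congr rfl fun k _ => by ring
      rw [hre, mInner_sum μ _ _ _ (fun k _ =>
        hintc _ _ (((poly_nice (Sa a)).mul (hnpow _)).mul (hFnice i)))]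
      exact Finset.sum_congr rfl fun k _ => (mInner_smul μ _ _ _).symm
    have h3 : ∀ i : ι, ∑ k : Fin (m i), w ⟨i, k⟩ * mInner μ
          (fun z => (Sa a).eval z * z ^ (k : ℕ) * F i z) (fun z => (p n).eval z)
        = mInner μ (fun z => (Sa a).eval z * (v i).eval z * F i z)
            (fun z => (p n).eval z) := fun i => h2 i
    rw [Finset.sum_congr rfl fun i _ => h3 i]
    rw [← mInner_sum μ _ _ _ (fun i _ => hint2 _
      (((poly_nice (Sa a)).mul (poly_nice (v i))).mul (hFnice i)))]
    have h4 : mInner μ (fun z => ∑ i : ι, (Sa a).eval z * (v i).eval z * F i z)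
        (fun z => (p n).eval z)
        = mInner μ (fun z => ((Sa a) * q).eval z) (fun z => (p n).eval z) := by
      unfold mInner
      apply integral_congr_ae
      filter_upwards [ae_mem_measSupport μ] with z hz
      have hzU : z ∈ U := hEU (hsupp hz)
      have h5 := hUeq hzU
      simp only at h5
      have h6 : ∑ i : ι, (Sa a).eval z * (v i).eval z * F i z
          = (Sa a).eval z * ∑ i : ι, (v i).eval z * F i z := by
        rw [Finset.mul_sum]
        exact Finset.sum_congr rfl fun i _ => by ring
      rw [h6, h5, Polynomial.eval_mul]
    rw [h4]
    exact orth_low hEc hsupp hp _ (lt_of_le_of_lt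
      (le_trans (Polynomial.natDegree_mul_le)
        (Nat.add_le_add_right (hSanat a) _)) hnbig)
  obtain ⟨a, ha⟩ := hsurj (Pi.single j₀ 1)
  have h0 := hrel a
  have ha' : M.mulVec a = Pi.single j₀ 1 := by
    simpa [Matrix.mulVecLin_apply] using ha
  rw [ha'] at h0
  apply hwj₀
  simpa [Pi.single_apply] using h0

end
end

section
/- Given F = (F₁,…,F_d) ∈ H(E)^d and a multi-index m = (m₁,…,m_d) ∈ ℕ^d, the system F can have at most |m| system poles with respect to m, counting their orders. Moreover, if F has exactly |m| system poles with respect to m counting multiplicities and ξ is a system pole of order τ, then for every s > τ there is no polynomial combination ∑_{i=1}^d v_i F_i with deg v_i < m_i that is holomorphic on a neighborhood of the closure of D_{|Φ(ξ)|} except for a pole at z = ξ of exact order s. -/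
open Complex MeasureTheory Polynomial Set Filter Topology
open scoped ENNReal

noncomputable section

/-! ### Auxiliary lemmas for stmt_11 -/

section AuxStmt11

variable {E : Set ℂ} {Φ : ℂ → ℂ}

lemma aux_memX (hΦ : IsExtConfMap E Φ) {z : ℂ} (hz : z ∈ Eᶜ) :
    1 < ‖Φ z‖ := hΦ.2.1.mapsTo hz

lemma aux_locOpen (hEc : IsCompact E) (hΦ : IsExtConfMap E Φ) {z : ℂ} (hz : z ∈ Eᶜ) :
    𝓝 (Φ z) ≤ Filter.map Φ (𝓝 z) := by
  have hW : IsOpen Eᶜ := hEc.isClosed.isOpen_compl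
  have hA : AnalyticAt ℂ Φ z := hΦ.1.analyticAt (hW.mem_nhds hz)
  rcases hA.eventually_constant_or_nhds_le_map_nhds with h | h
  · exfalso
    have h2 : ∀ᶠ z' in 𝓝[≠] z, Φ z' = Φ z ∧ z' ∈ Eᶜ :=
      ((h.and (hW.eventually_mem hz)).filter_mono nhdsWithin_le_nhds)
    have h3 : ∀ᶠ z' in 𝓝[≠] z, z' ≠ z := self_mem_nhdsWithin
    obtain ⟨z', ⟨hz'eq, hz'W⟩, hz'ne⟩ := (h2.and h3).exists
    exact hz'ne (hΦ.2.1.injOn hz'W hz hz'eq)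
  · exact h

lemma aux_psi_spec (hΦ : IsExtConfMap E Φ) {w : ℂ} (hw : 1 < ‖w‖) :
    Function.invFunOn Φ Eᶜ w ∈ Eᶜ ∧ Φ (Function.invFunOn Φ Eᶜ w) = w := by
  have : ∃ a ∈ Eᶜ, Φ a = w := hΦ.2.1.surjOn hw
  exact ⟨Function.invFunOn_mem this, Function.invFunOn_eq this⟩

lemma aux_psi_left (hΦ : IsExtConfMap E Φ) {z : ℂ} (hz : z ∈ Eᶜ) :
    Function.invFunOn Φ Eᶜ (Φ z) = z :=
  hΦ.2.1.injOn.leftInvOn_invFunOn hz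

lemma aux_psi_cont (hEc : IsCompact E) (hΦ : IsExtConfMap E Φ) :
    ContinuousOn (Function.invFunOn Φ Eᶜ) {w : ℂ | 1 < ‖w‖} := by
  intro w₀ hw₀
  obtain ⟨hmem, heq⟩ := aux_psi_spec hΦ hw₀
  intro V hV
  have hVW : V ∩ Eᶜ ∈ 𝓝 (Function.invFunOn Φ Eᶜ w₀) :=
    Filter.inter_mem hV ((hEc.isClosed.isOpen_compl).mem_nhds hmem)
  set V₁ := interior (V ∩ Eᶜ) with hV₁
  have hV₁mem : V₁ ∈ 𝓝 (Function.invFunOn Φ Eᶜ w₀) := by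
    rw [hV₁]; exact interior_mem_nhds.2 hVW
  have himg : Φ '' V₁ ∈ 𝓝 w₀ := by
    have := aux_locOpen hEc hΦ hmem
    rw [heq] at this
    exact this (Filter.image_mem_map hV₁mem)
  have hsub : Φ '' V₁ ∩ {w : ℂ | 1 < ‖w‖} ⊆ (Function.invFunOn Φ Eᶜ) ⁻¹' V := by
    rintro w ⟨⟨z', hz'V₁, rfl⟩, hwX⟩
    have hz'W : z' ∈ Eᶜ := (interior_subset hz'V₁).2
    have hinv : Function.invFunOn Φ Eᶜ (Φ z') = z' := aux_psi_left hΦ hz'W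
    rw [Set.mem_preimage, hinv]
    exact (interior_subset hz'V₁).1
  rw [Filter.mem_map]
  exact Filter.mem_of_superset
    (Filter.inter_mem (nhdsWithin_le_nhds himg) self_mem_nhdsWithin) hsub

lemma aux_proper (hΦ : IsExtConfMap E Φ) :
    ∃ B : ℝ, 0 < B ∧ ∀ z : ℂ, B < ‖z‖ → 2 < ‖Φ z‖ := by
  obtain ⟨c, hc, hten⟩ := hΦ.2.2
  have h1 : ∀ᶠ z in Bornology.cobounded ℂ, dist (Φ z / z) (c : ℂ) < c / 2 :=
    hten (Metric.ball_mem_nhds _ (by positivity))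
  rw [(Metric.hasBasis_cobounded_compl_closedBall (0 : ℂ)).eventually_iff] at h1
  obtain ⟨R, -, hR⟩ := h1
  refine ⟨max R (4 / c) + max R (4 / c) + 1, by positivity, fun z hz => ?_⟩
  have hmaxnn : (0 : ℝ) ≤ max R (4 / c) := le_trans (by positivity) (le_max_right _ _)
  have hzR : R < ‖z‖ := by
    have := le_max_left R (4 / c); linarith
  have hz4 : 4 / c < ‖z‖ := by
    have := le_max_right R (4 / c); linarith
  have hzpos : 0 < ‖z‖ := by linarith
  have hz0 : ‖z‖ ≠ 0 := ne_of_gt hzpos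
  have hmem : z ∈ (Metric.closedBall (0 : ℂ) R)ᶜ := by
    simp only [Set.mem_compl_iff, Metric.mem_closedBall, Complex.dist_eq, sub_zero, not_le]
    exact hzR
  have hd := hR hmem
  rw [Complex.dist_eq] at hd
  have h2 : c / 2 < ‖Φ z / z‖ := by
    have h3 : ‖(c : ℂ)‖ - ‖Φ z / z‖ ≤ ‖(c : ℂ) - Φ z / z‖ := norm_sub_norm_le _ _
    rw [norm_sub_rev] at hd
    have h4 : ‖(c : ℂ)‖ = c := by
      rw [Complex.norm_real, Real.norm_eq_abs, abs_of_pos hc]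
    linarith
  have h5 : ‖Φ z‖ = ‖Φ z / z‖ * ‖z‖ := by
    rw [norm_div]
    field_simp
  rw [h5]
  calc (2 : ℝ) = (c / 2) * (4 / c) := by field_simp; ring
    _ < (c / 2) * ‖z‖ := by
        apply mul_lt_mul_of_pos_left hz4 (by positivity)
    _ ≤ ‖Φ z / z‖ * ‖z‖ := by
        apply mul_le_mul_of_nonneg_right (le_of_lt h2) (by positivity)

lemma aux_accum (hEc : IsCompact E) (hΦ : IsExtConfMap E Φ)
    {O : Set ℂ} (hO : IsOpen O) (hEO : E ⊆ O) {ρ : ℝ} (hρ : 1 < ρ) :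
    ∃ z, z ∈ O ∧ z ∈ Eᶜ ∧ ‖Φ z‖ < ρ := by
  obtain ⟨B, hB, hBp⟩ := aux_proper hΦ
  -- the sequence of preimages of 1 + 1/(n+1)
  set wseq : ℕ → ℂ := fun n => ((1 + 1 / (n + 1) : ℝ) : ℂ) with hwseq
  have hwX : ∀ n : ℕ, 1 < ‖wseq n‖ := by
    intro n
    rw [hwseq]
    simp only [Complex.norm_real, Real.norm_eq_abs]
    rw [abs_of_pos (by positivity)]
    have : (0 : ℝ) < 1 / (n + 1) := by positivity
    linarith
  set u : ℕ → ℂ := fun n => Function.invFunOn Φ Eᶜ (wseq n) with hu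
  have huW : ∀ n, u n ∈ Eᶜ := fun n => (aux_psi_spec hΦ (hwX n)).1
  have huΦ : ∀ n, Φ (u n) = wseq n := fun n => (aux_psi_spec hΦ (hwX n)).2
  have huabs : ∀ n, ‖Φ (u n)‖ = 1 + 1 / (n + 1) := by
    intro n
    rw [huΦ n, hwseq]
    simp only [Complex.norm_real, Real.norm_eq_abs]
    rw [abs_of_pos (by positivity)]
  have huB : ∀ n, u n ∈ Metric.closedBall (0 : ℂ) B := by
    intro n
    simp only [Metric.mem_closedBall, Complex.dist_eq, sub_zero]
    by_contra hcon
    push_neg at hcon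
    have := hBp (u n) hcon
    rw [huabs n] at this
    have h1 : (1 : ℝ) / (n + 1) ≤ 1 := by
      rw [div_le_one (by positivity)]
      have : (0:ℝ) ≤ (n:ℝ) := Nat.cast_nonneg n
      linarith
    linarith
  obtain ⟨z₀, -, φ, hφmono, hφten⟩ :=
    (ProperSpace.isCompact_closedBall (0 : ℂ) B).tendsto_subseq huB
  have hz₀E : z₀ ∈ E := by
    by_contra hz₀
    have hz₀W : z₀ ∈ Eᶜ := hz₀
    have hcont : ContinuousAt Φ z₀ :=
      (hΦ.1.differentiableAt ((hEc.isClosed.isOpen_compl).mem_nhds hz₀W)).continuousAt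
    have h1 : Filter.Tendsto (fun k => Φ (u (φ k))) Filter.atTop (𝓝 (Φ z₀)) :=
      (hcont.tendsto.comp hφten)
    have h2 : Filter.Tendsto (fun k => Φ (u (φ k))) Filter.atTop (𝓝 (1 : ℂ)) := by
      have h3 : Filter.Tendsto (fun k => ((1 + 1 / (φ k + 1) : ℝ) : ℂ)) Filter.atTop (𝓝 ((1:ℝ) : ℂ)) := by
        apply Filter.Tendsto.comp (Complex.continuous_ofReal.tendsto _)
        have h5 : Filter.Tendsto (fun k : ℕ => 1 / ((φ k : ℝ) + 1)) Filter.atTop (𝓝 0) := by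
          have := (tendsto_one_div_add_atTop_nhds_zero_nat (𝕜 := ℝ)).comp (StrictMono.tendsto_atTop hφmono)
          exact this
        have h4 := h5.const_add (1 : ℝ)
        simpa using h4
      have heq : ∀ k, Φ (u (φ k)) = ((1 + 1 / (φ k + 1) : ℝ) : ℂ) := fun k => huΦ (φ k)
      simp only [Complex.ofReal_one] at h3
      exact Filter.Tendsto.congr (fun k => (heq k).symm) h3
    have hΦz₀ : Φ z₀ = 1 := tendsto_nhds_unique h1 h2
    have := aux_memX hΦ hz₀W
    rw [hΦz₀] at this
    simp at this
  -- now pick k large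
  have hOmem : ∀ᶠ k in Filter.atTop, u (φ k) ∈ O :=
    hφten (hO.mem_nhds (hEO hz₀E))
  have hsmall : ∀ᶠ k in Filter.atTop, (1 : ℝ) + 1 / (φ k + 1) < ρ := by
    have h5 : Filter.Tendsto (fun k : ℕ => 1 / ((φ k : ℝ) + 1)) Filter.atTop (𝓝 0) := by
      have := (tendsto_one_div_add_atTop_nhds_zero_nat (𝕜 := ℝ)).comp (StrictMono.tendsto_atTop hφmono)
      exact this
    have h4 := h5.const_add (1 : ℝ)
    rw [add_zero] at h4
    exact h4.eventually_lt_const hρ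
  obtain ⟨k, hkO, hkρ⟩ := (hOmem.and hsmall).exists
  refine ⟨u (φ k), hkO, huW (φ k), ?_⟩
  rw [huabs (φ k)]
  exact hkρ

lemma aux_A_preconn (hEc : IsCompact E) (hΦ : IsExtConfMap E Φ) {ρ : ℝ} :
    IsPreconnected {z : ℂ | z ∈ Eᶜ ∧ ‖Φ z‖ < ρ} := by
  -- the annulus 1 < |w| < ρ
  set Ann : Set ℂ := {w : ℂ | 1 < ‖w‖ ∧ ‖w‖ < ρ} with hAnn
  have hAnnpre : IsPreconnected Ann := by
    have himg : Ann = (fun p : ℝ × ℝ => (p.1 : ℂ) * Complex.exp ((p.2 : ℂ) * Complex.I)) ''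
        (Set.Ioo (1 : ℝ) ρ ×ˢ (Set.univ : Set ℝ)) := by
      ext w
      constructor
      · rintro ⟨hw1, hw2⟩
        exact ⟨(‖w‖, Complex.arg w), ⟨⟨hw1, hw2⟩, Set.mem_univ _⟩,
          Complex.norm_mul_exp_arg_mul_I w⟩
      · rintro ⟨⟨r, θ⟩, ⟨⟨hr1, hr2⟩, -⟩, rfl⟩
        have habs : ‖(r : ℂ) * Complex.exp ((θ : ℂ) * Complex.I)‖ = r := by
          rw [norm_mul, Complex.norm_exp_ofReal_mul_I, mul_one, Complex.norm_real, Real.norm_eq_abs,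
            abs_of_pos (by linarith)]
        rw [Set.mem_setOf_eq, habs]
        exact ⟨hr1, hr2⟩
    rw [himg]
    apply IsPreconnected.image
    · exact isPreconnected_Ioo.prod isPreconnected_univ
    · apply Continuous.continuousOn
      continuity
  have hAeq : {z : ℂ | z ∈ Eᶜ ∧ ‖Φ z‖ < ρ} = Function.invFunOn Φ Eᶜ '' Ann := by
    ext z
    constructor
    · rintro ⟨hzW, hzρ⟩
      exact ⟨Φ z, ⟨aux_memX hΦ hzW, hzρ⟩, aux_psi_left hΦ hzW⟩
    · rintro ⟨w, ⟨hw1, hw2⟩, rfl⟩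
      obtain ⟨hmem, heq⟩ := aux_psi_spec hΦ hw1
      refine ⟨hmem, ?_⟩
      rw [heq]
      exact hw2
  rw [hAeq]
  apply hAnnpre.image
  apply (aux_psi_cont hEc hΦ).mono
  intro w hw
  exact hw.1

lemma aux_freq (hEc : IsCompact E) (hΦ : IsExtConfMap E Φ) {ξ : ℂ} (hξ : ξ ∈ Eᶜ) :
    ∃ᶠ z in 𝓝[≠] ξ, z ∈ Eᶜ ∧ ‖Φ z‖ < ‖Φ ξ‖ := by
  rw [Filter.frequently_iff]
  intro U hU
  rw [mem_nhdsWithin] at hU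
  obtain ⟨V, hVopen, hξV, hVsub⟩ := hU
  have hW : IsOpen Eᶜ := hEc.isClosed.isOpen_compl
  have hV'mem : V ∩ Eᶜ ∈ 𝓝 ξ := Filter.inter_mem (hVopen.mem_nhds hξV) (hW.mem_nhds hξ)
  have himg : Φ '' (V ∩ Eᶜ) ∈ 𝓝 (Φ ξ) :=
    aux_locOpen hEc hΦ hξ (Filter.image_mem_map hV'mem)
  obtain ⟨δ, hδpos, hδsub⟩ := Metric.mem_nhds_iff.1 himg
  have hρpos : (0 : ℝ) < ‖Φ ξ‖ := lt_trans one_pos (aux_memX hΦ hξ)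
  obtain ⟨t, ht0, ht1, htδ⟩ : ∃ t : ℝ, 0 < t ∧ t < 1 ∧ t * ‖Φ ξ‖ < δ := by
    refine ⟨min (δ / ‖Φ ξ‖) 1 / 2, by positivity, ?_, ?_⟩
    · have := min_le_right (δ / ‖Φ ξ‖) 1
      linarith
    · have h1 : min (δ / ‖Φ ξ‖) 1 / 2 ≤ δ / ‖Φ ξ‖ / 2 := by
        have := min_le_left (δ / ‖Φ ξ‖) 1
        linarith
      calc min (δ / ‖Φ ξ‖) 1 / 2 * ‖Φ ξ‖
          ≤ δ / ‖Φ ξ‖ / 2 * ‖Φ ξ‖ :=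
            mul_le_mul_of_nonneg_right h1 hρpos.le
        _ = δ / 2 := by
            field_simp
        _ < δ := by linarith
  have hwball : ((1 - t : ℝ) : ℂ) * Φ ξ ∈ Metric.ball (Φ ξ) δ := by
    rw [Metric.mem_ball, Complex.dist_eq]
    have he : ((1 - t : ℝ) : ℂ) * Φ ξ - Φ ξ = ((-t : ℝ) : ℂ) * Φ ξ := by
      push_cast
      ring
    rw [he, norm_mul, Complex.norm_real, Real.norm_eq_abs, abs_neg, abs_of_pos ht0]
    exact htδ
  have hwlt : ‖((1 - t : ℝ) : ℂ) * Φ ξ‖ < ‖Φ ξ‖ := by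
    rw [norm_mul, Complex.norm_real, Real.norm_eq_abs, abs_of_pos (by linarith)]
    nlinarith
  obtain ⟨z, hzmem, hzw⟩ := hδsub hwball
  have hzV : z ∈ V := hzmem.1
  have hzW : z ∈ Eᶜ := hzmem.2
  have hzne : z ∉ ({ξ} : Set ℂ) := by
    intro hmem1
    rw [Set.mem_singleton_iff] at hmem1
    rw [hmem1] at hzw
    rw [← hzw] at hwlt
    exact lt_irrefl _ hwlt
  refine ⟨z, hVsub ⟨hzV, hzne⟩, hzW, ?_⟩
  rw [hzw]
  exact hwlt

end AuxStmt11

section AuxStmt11b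

lemma aux_pole_notE {ι : Type*} [Fintype ι] {E : Set ℂ} {F : ι → ℂ → ℂ} {m : ι → ℕ}
    {g : ℂ → ℂ} {ξ : ℂ} {t : ℕ} (ht : 1 ≤ t)
    (hF : ∀ i, HoloNhd E (F i)) (hcomb : IsCombExt E F m g) (hpole : IsPoleOrd g ξ t) :
    ξ ∉ E := by
  intro hξE
  obtain ⟨v, hv, O', hO'open, hEO', hEq⟩ := hcomb
  obtain ⟨hh, ⟨V, hVopen, hξV, hhdiff⟩, hh0, hev⟩ := hpole
  choose UF hUFopen hEUF hUFdiff using hF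
  have hcontF : ∀ i, ContinuousAt (F i) ξ := fun i =>
    ((hUFdiff i).differentiableAt ((hUFopen i).mem_nhds (hEUF i hξE))).continuousAt
  have hcontComb : ContinuousAt (fun z => ∑ i, (v i).eval z * F i z) ξ :=
    tendsto_finset_sum _ fun i _ => (Polynomial.continuousAt (v i)).mul (hcontF i)
  have hgL : Filter.Tendsto g (𝓝[≠] ξ) (𝓝 (∑ i, (v i).eval ξ * F i ξ)) := by
    have hgn : g =ᶠ[𝓝[≠] ξ] (fun z => ∑ i, (v i).eval z * F i z) := by
      have hO'nhds : O' ∈ 𝓝[≠] ξ := nhdsWithin_le_nhds (hO'open.mem_nhds (hEO' hξE))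
      exact Filter.eventuallyEq_of_mem hO'nhds (fun z hz => (hEq hz).symm)
    exact (hcontComb.tendsto.mono_left nhdsWithin_le_nhds).congr' hgn.symm
  set L : ℂ := ∑ i, (v i).eval ξ * F i ξ with hL
  have hub : ∀ᶠ z in 𝓝[≠] ξ, ‖g z‖ < ‖L‖ + 1 := by
    have h1 : Filter.Tendsto (fun z => ‖g z‖) (𝓝[≠] ξ) (𝓝 (‖L‖)) :=
      (continuous_norm.continuousAt.tendsto.comp hgL)
    exact h1.eventually_lt_const (by linarith)
  have hhc : ContinuousAt hh ξ := (hhdiff.differentiableAt (hVopen.mem_nhds hξV)).continuousAt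
  have hhpos : 0 < ‖hh ξ‖ := norm_pos_iff.2 hh0
  have hhalf : ∀ᶠ z in 𝓝 ξ, ‖hh ξ‖ / 2 < ‖hh z‖ := by
    have h1 : Filter.Tendsto (fun z => ‖hh z‖) (𝓝 ξ) (𝓝 (‖hh ξ‖)) :=
      continuous_norm.continuousAt.tendsto.comp hhc
    exact h1.eventually_const_lt (by linarith)
  have hεpos : 0 < (‖hh ξ‖ / 2) / (‖L‖ + 1) := by positivity
  have hsmall : ∀ᶠ z in 𝓝 ξ, ‖z - ξ‖ ^ t <
      (‖hh ξ‖ / 2) / (‖L‖ + 1) := by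
    have hcont2 : Filter.Tendsto (fun z : ℂ => ‖z - ξ‖ ^ t) (𝓝 ξ)
        (𝓝 (‖ξ - ξ‖ ^ t)) :=
      ((continuous_norm.comp (continuous_id.sub continuous_const)).continuousAt).pow t
    rw [sub_self, norm_zero, zero_pow (by omega : t ≠ 0)] at hcont2
    exact hcont2.eventually_lt_const hεpos
  have hne : ∀ᶠ z in 𝓝[≠] ξ, z ≠ ξ := self_mem_nhdsWithin
  have hlb : ∀ᶠ z in 𝓝[≠] ξ, ‖L‖ + 1 ≤ ‖g z‖ := by
    filter_upwards [hev, hhalf.filter_mono nhdsWithin_le_nhds,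
      hsmall.filter_mono nhdsWithin_le_nhds, hne] with z h1 h2 h3 h4
    rw [h1, norm_div, norm_pow]
    have hzξ : 0 < ‖z - ξ‖ := norm_pos_iff.2 (sub_ne_zero.2 h4)
    have hpowpos : 0 < ‖z - ξ‖ ^ t := pow_pos hzξ t
    rw [le_div_iff₀ hpowpos]
    calc (‖L‖ + 1) * ‖z - ξ‖ ^ t
        ≤ (‖L‖ + 1) * ((‖hh ξ‖ / 2) / (‖L‖ + 1)) := by
          apply mul_le_mul_of_nonneg_left (le_of_lt h3) (by positivity)
      _ = ‖hh ξ‖ / 2 := by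
          field_simp
      _ ≤ ‖hh z‖ := le_of_lt h2
  obtain ⟨z, hzu, hzl⟩ := (hub.and hlb).exists
  linarith

lemma aux_linIndep {ι : Type*} [Fintype ι] {E : Set ℂ} (hEc : IsCompact E) {Φ : ℂ → ℂ}
    (hΦ : IsExtConfMap E Φ) {F : ι → ℂ → ℂ} (hF : ∀ i, HoloNhd E (F i)) {m : ι → ℕ}
    {J : Type*} [Fintype J] (ξ : J → ℂ) (t : J → ℕ) (g : J → ℂ → ℂ)
    (hinj : Function.Injective (fun j => (ξ j, t j)))
    (ht : ∀ j, 1 ≤ t j)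
    (hcomb : ∀ j, IsCombExt E F m (g j))
    (hpole : ∀ j, HoloExceptPole E Φ (g j) (ξ j) (t j)) :
    Fintype.card J ≤ ∑ i, m i := by
  classical
  choose v hvdeg hvagr using hcomb
  choose Ov hOvopen hOvE hOveq using hvagr
  choose U hUopen hUsub hUdiff hUpole using hpole
  choose hh hhVex hh0 hhev using hUpole
  choose V hVopen hVmem hVdiff using hhVex
  have hW : IsOpen Eᶜ := hEc.isClosed.isOpen_compl
  have hξW : ∀ j, ξ j ∈ Eᶜ := fun j =>
    aux_pole_notE (ht j) hF ⟨v j, hvdeg j, Ov j, hOvopen j, hOvE j, hOveq j⟩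
      ⟨hh j, ⟨V j, hVopen j, hVmem j, hVdiff j⟩, hh0 j, hhev j⟩
  have hli : LinearIndependent ℂ v := by
    by_contra hnli
    obtain ⟨c, hsum, j₁, hc1⟩ := Fintype.not_linearIndependent_iff.1 hnli
    set s : Finset J := Finset.univ.filter (fun j => c j ≠ 0) with hs_def
    have hmemc : ∀ j, j ∈ s → c j ≠ 0 := by
      intro j hj
      rw [hs_def, Finset.mem_filter] at hj
      exact hj.2
    have hj₁s : j₁ ∈ s := by
      rw [hs_def, Finset.mem_filter]
      exact ⟨Finset.mem_univ _, hc1⟩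
    obtain ⟨jm, hjms, hjmin⟩ := s.exists_min_image (fun j => ‖Φ (ξ j)‖) ⟨j₁, hj₁s⟩
    have hρ1 : 1 < ‖Φ (ξ jm)‖ := aux_memX hΦ (hξW jm)
    set A : Set ℂ := {z : ℂ | z ∈ Eᶜ ∧ ‖Φ z‖ < ‖Φ (ξ jm)‖} with hA_def
    have hADj : ∀ j ∈ s, A ⊆ Dcan E Φ (ENNReal.ofReal (‖Φ (ξ j)‖)) := by
      intro j hj z hz
      refine Or.inr ⟨hz.1, ?_⟩
      rw [ENNReal.ofReal_lt_ofReal_iff (lt_trans one_pos (aux_memX hΦ (hξW j)))]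
      exact lt_of_lt_of_le hz.2 (hjmin j hj)
    have hAU : ∀ j ∈ s, A ⊆ U j \ {ξ j} := by
      intro j hj z hz
      refine ⟨hUsub j (subset_closure (hADj j hj hz)), ?_⟩
      simp only [Set.mem_singleton_iff]
      intro hzξ
      rw [hzξ] at hz
      exact absurd (hjmin j hj) (not_le.2 hz.2)
    have hAopen : IsOpen A := by
      have heq : A = Eᶜ ∩ (fun z => ‖Φ z‖) ⁻¹' Set.Iio (‖Φ (ξ jm)‖) := rfl
      rw [heq]
      exact ContinuousOn.isOpen_inter_preimage
        (continuous_norm.comp_continuousOn hΦ.1.continuousOn) hW isOpen_Iio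
    have hdiffA : DifferentiableOn ℂ (fun z => ∑ j ∈ s, c j * g j z) A := by
      apply DifferentiableOn.fun_sum
      intro j hj
      exact ((hUdiff j).mono (hAU j hj)).const_mul (c j)
    -- the coefficient vector sums to zero
    have hveq : (∑ j ∈ s, c j • v j) = 0 := by
      have h1 : ∑ j ∈ s, c j • v j = ∑ j, c j • v j := by
        rw [hs_def]
        apply Finset.sum_filter_of_ne
        intro x _ hx hc0
        exact hx (by rw [hc0, zero_smul])
      rw [h1, hsum]
    have hcoeff : ∀ (i : ι) (z : ℂ), ∑ j ∈ s, c j * (v j i).eval z = 0 := by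
      intro i z
      have h1 := congrArg (fun w : ι → Polynomial ℂ => Polynomial.eval z (w i)) hveq
      simpa [Finset.sum_apply, Polynomial.eval_finset_sum, Polynomial.eval_smul,
        smul_eq_mul] using h1
    have hOopen : IsOpen (⋂ j ∈ s, Ov j) := isOpen_biInter_finset fun j _ => hOvopen j
    have hzeroO : ∀ z ∈ ⋂ j ∈ s, Ov j, (∑ j ∈ s, c j * g j z) = 0 := by
      intro z hz
      have hgz : ∀ j ∈ s, g j z = ∑ i, (v j i).eval z * F i z := fun j hj =>
        ((hOveq j) (Set.mem_iInter₂.1 hz j hj)).symm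
      calc ∑ j ∈ s, c j * g j z
          = ∑ j ∈ s, ∑ i, c j * ((v j i).eval z * F i z) := by
            refine Finset.sum_congr rfl fun j hj => ?_
            rw [hgz j hj, Finset.mul_sum]
        _ = ∑ i, ∑ j ∈ s, c j * ((v j i).eval z * F i z) := Finset.sum_comm
        _ = ∑ i, (∑ j ∈ s, c j * (v j i).eval z) * F i z := by
            refine Finset.sum_congr rfl fun i _ => ?_
            rw [Finset.sum_mul]
            refine Finset.sum_congr rfl fun j _ => ?_
            ring
        _ = 0 := by
            refine Finset.sum_eq_zero fun i _ => ?_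
            rw [hcoeff i z, zero_mul]
    obtain ⟨z₁, hz₁O, hz₁W, hz₁ρ⟩ := aux_accum hEc hΦ hOopen
      (Set.subset_iInter₂ fun j _ => hOvE j) hρ1
    have hz₁A : z₁ ∈ A := ⟨hz₁W, hz₁ρ⟩
    have hanA : AnalyticOnNhd ℂ (fun z => ∑ j ∈ s, c j * g j z) A :=
      hdiffA.analyticOnNhd hAopen
    have hev0 : (fun z => ∑ j ∈ s, c j * g j z) =ᶠ[𝓝 z₁] (0 : ℂ → ℂ) := by
      filter_upwards [hOopen.mem_nhds hz₁O] with z hz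
      exact hzeroO z hz
    have hzeroA : Set.EqOn (fun z => ∑ j ∈ s, c j * g j z) 0 A :=
      hanA.eqOn_zero_of_preconnected_of_eventuallyEq_zero (aux_A_preconn hEc hΦ) hz₁A hev0
    -- the pole at ξ jm survives: contradiction
    have hfreqA := aux_freq hEc hΦ (hξW jm)
    have hclA : ξ jm ∈ closure A := by
      rw [mem_closure_iff_frequently]
      exact (hfreqA.filter_mono nhdsWithin_le_nhds).mono (fun z hz => hz)
    have hξsU : ∀ j ∈ s, ξ jm ∈ U j := fun j hj =>
      hUsub j (closure_mono (hADj j hj) hclA)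
    have hcontg : ∀ j ∈ s, ξ j ≠ ξ jm → ContinuousAt (g j) (ξ jm) := by
      intro j hj hne2
      have hopen : IsOpen (U j \ {ξ j}) := (hUopen j).sdiff isClosed_singleton
      have hmem : ξ jm ∈ U j \ {ξ j} := ⟨hξsU j hj, by simp [Ne.symm hne2]⟩
      exact ((hUdiff j).differentiableAt (hopen.mem_nhds hmem)).continuousAt
    have hconth : ∀ j, ξ j = ξ jm → ContinuousAt (hh j) (ξ jm) := by
      intro j hje
      have hmemV : ξ jm ∈ V j := hje ▸ hVmem j
      exact ((hVdiff j).differentiableAt ((hVopen j).mem_nhds hmemV)).continuousAt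
    have hTne : (s.filter (fun j => ξ j = ξ jm)).Nonempty :=
      ⟨jm, Finset.mem_filter.2 ⟨hjms, rfl⟩⟩
    obtain ⟨j₀, hj₀T, hj₀max⟩ := (s.filter (fun j => ξ j = ξ jm)).exists_max_image t hTne
    have hj₀s : j₀ ∈ s := (Finset.mem_filter.1 hj₀T).1
    have hξj₀ : ξ j₀ = ξ jm := (Finset.mem_filter.1 hj₀T).2
    set G : ℂ → ℂ := fun z =>
        (∑ j ∈ s.filter (fun j => ξ j = ξ jm), c j * (hh j z * (z - ξ jm) ^ (t j₀ - t j)))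
        + (z - ξ jm) ^ (t j₀) * ∑ j ∈ s.filter (fun j => ¬ ξ j = ξ jm), c j * g j z
      with hG_def
    have hGcont : ContinuousAt G (ξ jm) := by
      rw [hG_def]
      apply ContinuousAt.add
      · exact tendsto_finset_sum _ fun j hj =>
          continuousAt_const.mul ((hconth j (Finset.mem_filter.1 hj).2).mul
            ((continuousAt_id.sub continuousAt_const).pow _))
      · exact ((continuousAt_id.sub continuousAt_const).pow _).mul
          (tendsto_finset_sum _ fun j hj =>
            continuousAt_const.mul
              (hcontg j (Finset.mem_filter.1 hj).1 (Finset.mem_filter.1 hj).2))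
    have hallT : ∀ᶠ z in 𝓝[≠] ξ jm, ∀ j ∈ s.filter (fun j => ξ j = ξ jm),
        g j z = hh j z / (z - ξ jm) ^ (t j) := by
      rw [Filter.eventually_all_finset]
      intro j hj
      have hje : ξ j = ξ jm := (Finset.mem_filter.1 hj).2
      have h2 := hhev j
      rw [hje] at h2
      exact h2
    have hne' : ∀ᶠ z in 𝓝[≠] ξ jm, z ≠ ξ jm := self_mem_nhdsWithin
    have hevEq : ∀ᶠ z in 𝓝[≠] ξ jm, G z = (z - ξ jm) ^ (t j₀) * (∑ j ∈ s, c j * g j z) := by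
      filter_upwards [hallT, hne'] with z hz hzne
      have hu : z - ξ jm ≠ 0 := sub_ne_zero.2 hzne
      simp only [hG_def]
      have hsplit : (∑ j ∈ s, c j * g j z) =
          (∑ j ∈ s.filter (fun j => ξ j = ξ jm), c j * g j z)
          + ∑ j ∈ s.filter (fun j => ¬ ξ j = ξ jm), c j * g j z :=
        (Finset.sum_filter_add_sum_filter_not s (fun j => ξ j = ξ jm) (fun j => c j * g j z)).symm
      rw [hsplit, mul_add]
      congr 1
      rw [Finset.mul_sum]
      refine Finset.sum_congr rfl fun j hj => ?_
      rw [hz j hj]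
      have hle : t j ≤ t j₀ := hj₀max j hj
      have hpow : (z - ξ jm) ^ (t j₀) = (z - ξ jm) ^ (t j) * (z - ξ jm) ^ (t j₀ - t j) := by
        rw [← pow_add]
        congr 1
        omega
      rw [hpow]
      have hp0 : (z - ξ jm) ^ (t j) ≠ 0 := pow_ne_zero _ hu
      field_simp
    have hfreqG0 : ∃ᶠ z in 𝓝[≠] ξ jm, G z = 0 := by
      refine (hfreqA.and_eventually hevEq).mono ?_
      rintro z ⟨hzA, hzeq⟩
      rw [hzeq]
      have h0 : (∑ j ∈ s, c j * g j z) = 0 := hzeroA hzA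
      rw [h0, mul_zero]
    have htendG : Filter.Tendsto G (𝓝[≠] ξ jm) (𝓝 (G (ξ jm))) :=
      hGcont.tendsto.mono_left nhdsWithin_le_nhds
    have hG0 : G (ξ jm) = 0 :=
      tendsto_nhds_unique_of_frequently_eq htendG tendsto_const_nhds hfreqG0
    have hKne : t j₀ ≠ 0 := by have := ht j₀; omega
    have hGval : G (ξ jm) = c j₀ * hh j₀ (ξ jm) := by
      have hbeta : G (ξ jm) = (∑ j ∈ s.filter (fun j => ξ j = ξ jm),
          c j * (hh j (ξ jm) * ((0 : ℂ)) ^ (t j₀ - t j)))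
          + (0 : ℂ) ^ (t j₀) * ∑ j ∈ s.filter (fun j => ¬ ξ j = ξ jm), c j * g j (ξ jm) := by
        rw [hG_def]
        simp only [sub_self]
      rw [hbeta, zero_pow hKne, zero_mul, add_zero]
      have h0 : ∀ j ∈ s.filter (fun j => ξ j = ξ jm), j ≠ j₀ →
          c j * (hh j (ξ jm) * (0 : ℂ) ^ (t j₀ - t j)) = 0 := by
        intro j hj hjne
        have hje : ξ j = ξ jm := (Finset.mem_filter.1 hj).2
        have hlt : t j < t j₀ := by
          rcases lt_or_eq_of_le (hj₀max j hj) with h | h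
          · exact h
          · exact absurd (hinj (show (fun j => (ξ j, t j)) j = (fun j => (ξ j, t j)) j₀ by
              simp only [Prod.mk.injEq]
              exact ⟨by rw [hje, hξj₀], h⟩)) hjne
        rw [zero_pow (by omega : t j₀ - t j ≠ 0), mul_zero, mul_zero]
      have h1 : j₀ ∉ s.filter (fun j => ξ j = ξ jm) →
          c j₀ * (hh j₀ (ξ jm) * (0 : ℂ) ^ (t j₀ - t j₀)) = 0 :=
        fun habs => absurd hj₀T habs
      rw [Finset.sum_eq_single j₀ h0 h1, Nat.sub_self, pow_zero, mul_one]
    rw [hGval] at hG0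
    have hcj₀ : c j₀ ≠ 0 := hmemc j₀ hj₀s
    have hhj₀ : hh j₀ (ξ jm) ≠ 0 := by
      rw [← hξj₀]
      exact hh0 j₀
    exact (mul_ne_zero hcj₀ hhj₀) hG0
  -- conclude by finite dimensionality
  haveI hFD : ∀ i : ι, FiniteDimensional ℂ ↥(Polynomial.degreeLT ℂ (m i)) := fun i =>
    (Polynomial.degreeLTEquiv ℂ (m i)).symm.finiteDimensional
  let v' : J → (∀ i : ι, ↥(Polynomial.degreeLT ℂ (m i))) := fun j i =>
    ⟨v j i, Polynomial.mem_degreeLT.2 (hvdeg j i)⟩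
  let f : (∀ i : ι, ↥(Polynomial.degreeLT ℂ (m i))) →ₗ[ℂ] (ι → Polynomial ℂ) :=
    LinearMap.pi (fun i => (Polynomial.degreeLT ℂ (m i)).subtype.comp (LinearMap.proj i))
  have hfv : f ∘ v' = v := by
    funext j
    funext i
    rfl
  have hli' : LinearIndependent ℂ v' := LinearIndependent.of_comp f (by rw [hfv]; exact hli)
  have hcard := hli'.fintype_card_le_finrank
  rw [Module.finrank_pi_fintype] at hcard
  have hrk : ∀ i : ι, Module.finrank ℂ ↥(Polynomial.degreeLT ℂ (m i)) = m i := by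
    intro i
    rw [(Polynomial.degreeLTEquiv ℂ (m i)).finrank_eq]
    simp [Module.finrank_pi]
  calc Fintype.card J ≤ ∑ i, Module.finrank ℂ ↥(Polynomial.degreeLT ℂ (m i)) := hcard
    _ = ∑ i, m i := Finset.sum_congr rfl fun i _ => hrk i

lemma aux_ord_unique {ι : Type*} [Fintype ι] {E : Set ℂ} {Φ : ℂ → ℂ} {F : ι → ℂ → ℂ}
    {m : ι → ℕ} {ξ : ℂ} {τ₁ τ₂ : ℕ} (h1 : IsSystemPoleOrd E Φ F m ξ τ₁)
    (h2 : IsSystemPoleOrd E Φ F m ξ τ₂) : τ₁ = τ₂ := by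
  by_contra hne
  rcases Nat.lt_or_ge τ₁ τ₂ with h | h
  · exact h1.2.2 (fun t ht1 ht2 => h2.2.1 t ht1 (by omega))
  · exact h2.2.2 (fun t ht1 ht2 => h1.2.1 t ht1 (by omega))

end AuxStmt11b

/-- Lemma 3.8 : at most `|m|` system poles; in case of exactly `|m|`
system poles no polynomial combination has a pole of higher order. -/
theorem stmt_11 {ι : Type*} [Fintype ι] (E : Set ℂ) (hEc : IsCompact E)
    (hEinf : E.Infinite)
    (hEsc : SimplyConnectedSpace ↥((((↑) : ℂ → OnePoint ℂ) '' E)ᶜ))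
    (Φ : ℂ → ℂ) (hΦ : IsExtConfMap E Φ)
    (F : ι → ℂ → ℂ) (hF : ∀ i, HoloNhd E (F i))
    (m : ι → ℕ) (hm : ∀ i, 1 ≤ m i) :
    (∀ (S : Finset ℂ) (ord : ℂ → ℕ),
      (∀ ξ ∈ S, IsSystemPoleOrd E Φ F m ξ (ord ξ)) →
      ∑ ξ ∈ S, ord ξ ≤ ∑ i, m i) ∧
    (HasExactlySysPoles E Φ F m (∑ i, m i) →
      ∀ ξ τ, IsSystemPoleOrd E Φ F m ξ τ → ∀ s, τ < s →
        ¬ ∃ g, IsCombExt E F m g ∧ HoloExceptPole E Φ g ξ s) := by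
  classical
  constructor
  · -- Part 1
    intro S ord hS
    set J' : Finset ((_ : ℂ) × ℕ) := S.sigma (fun ζ => Finset.Icc 1 (ord ζ)) with hJ'
    have hdata : ∀ j : {x // x ∈ J'}, ∃ gg, IsCombExt E F m gg ∧
        HoloExceptPole E Φ gg j.1.1 j.1.2 := by
      rintro ⟨⟨ζ, k⟩, hj⟩
      rw [hJ', Finset.mem_sigma] at hj
      obtain ⟨hζS, hk⟩ := hj
      rw [Finset.mem_Icc] at hk
      exact (hS ζ hζS).2.1 k hk.1 hk.2
    choose gg hg1 hg2 using hdata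
    have hinj : Function.Injective
        (fun j : {x // x ∈ J'} => (j.1.1, j.1.2)) := by
      rintro ⟨⟨ζ₁, k₁⟩, h₁⟩ ⟨⟨ζ₂, k₂⟩, h₂⟩ hab
      simp only [Prod.mk.injEq] at hab
      obtain ⟨hζ, hk⟩ := hab
      subst hζ
      subst hk
      rfl
    have hts : ∀ j : {x // x ∈ J'}, 1 ≤ j.1.2 := by
      rintro ⟨⟨ζ, k⟩, hj⟩
      rw [hJ', Finset.mem_sigma] at hj
      exact (Finset.mem_Icc.1 hj.2).1
    have hcard := aux_linIndep hEc hΦ hF (fun j : {x // x ∈ J'} => j.1.1)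
      (fun j => j.1.2) gg hinj hts hg1 hg2
    have h1 : Fintype.card {x // x ∈ J'} = J'.card := Fintype.card_coe J'
    have h2 : J'.card = ∑ ζ ∈ S, ord ζ := by
      rw [hJ', Finset.card_sigma]
      refine Finset.sum_congr rfl fun ζ _ => ?_
      rw [Nat.card_Icc]
      omega
    calc ∑ ζ ∈ S, ord ζ = Fintype.card {x // x ∈ J'} := by rw [h1, h2]
      _ ≤ ∑ i, m i := hcard
  · -- Part 2
    rintro ⟨S₀, ord₀, ⟨hmemiff, hordspec⟩, hsum⟩ ξ₀ τ hτ s hτs ⟨g₀, hg₀comb, hg₀pole⟩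
    have hξ₀S : ξ₀ ∈ S₀ := (hmemiff ξ₀).2 ⟨τ, hτ⟩
    have hordξ₀ : ord₀ ξ₀ = τ := aux_ord_unique (hordspec ξ₀ hξ₀S) hτ
    set J' : Finset ((_ : ℂ) × ℕ) := S₀.sigma (fun ζ => Finset.Icc 1 (ord₀ ζ)) with hJ'
    have hdata : ∀ j : {x // x ∈ J'}, ∃ gg, IsCombExt E F m gg ∧
        HoloExceptPole E Φ gg j.1.1 j.1.2 := by
      rintro ⟨⟨ζ, k⟩, hj⟩
      rw [hJ', Finset.mem_sigma] at hj
      obtain ⟨hζS, hk⟩ := hj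
      rw [Finset.mem_Icc] at hk
      exact (hordspec ζ hζS).2.1 k hk.1 hk.2
    choose gg hg1 hg2 using hdata
    have hbound : ∀ j : {x // x ∈ J'}, j.1.2 ≤ ord₀ j.1.1 := by
      rintro ⟨⟨ζ, k⟩, hj⟩
      rw [hJ', Finset.mem_sigma] at hj
      exact (Finset.mem_Icc.1 hj.2).2
    have hmemS₀ : ∀ j : {x // x ∈ J'}, j.1.1 ∈ S₀ := by
      rintro ⟨⟨ζ, k⟩, hj⟩
      rw [hJ', Finset.mem_sigma] at hj
      exact hj.1
    -- extended family on an Option type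
    have hinj : Function.Injective
        (fun o : Option {x // x ∈ J'} =>
          (o.elim ξ₀ (fun j => j.1.1), o.elim s (fun j => j.1.2))) := by
      have hkey : ∀ j : {x // x ∈ J'}, ¬ (j.1.1 = ξ₀ ∧ j.1.2 = s) := by
        intro j ⟨he1, he2⟩
        have := hbound j
        rw [he1, he2, hordξ₀] at this
        omega
      rintro (_ | a) (_ | b) hab <;> simp only [Option.elim, Prod.mk.injEq] at hab
      · rfl
      · exact absurd ⟨hab.1.symm, hab.2.symm⟩ (hkey b)
      · exact absurd ⟨hab.1, hab.2⟩ (hkey a)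
      · obtain ⟨a, ha⟩ := a
        obtain ⟨b, hb⟩ := b
        obtain ⟨ζ₁, k₁⟩ := a
        obtain ⟨ζ₂, k₂⟩ := b
        obtain ⟨hζ, hk⟩ := hab
        simp only at hζ hk
        subst hζ
        subst hk
        rfl
    have hts : ∀ o : Option {x // x ∈ J'}, 1 ≤ o.elim s (fun j => j.1.2) := by
      rintro (_ | j)
      · have h0 := hτ.1
        simp only [Option.elim]
        omega
      · simp only [Option.elim]
        rcases j with ⟨⟨ζ, k⟩, hj⟩
        rw [hJ', Finset.mem_sigma] at hj
        exact (Finset.mem_Icc.1 hj.2).1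
    have hcomb : ∀ o : Option {x // x ∈ J'}, IsCombExt E F m (o.elim g₀ gg) := by
      rintro (_ | j)
      · exact hg₀comb
      · exact hg1 j
    have hpole : ∀ o : Option {x // x ∈ J'}, HoloExceptPole E Φ (o.elim g₀ gg)
        (o.elim ξ₀ (fun j => j.1.1)) (o.elim s (fun j => j.1.2)) := by
      rintro (_ | j)
      · exact hg₀pole
      · exact hg2 j
    have hcard := aux_linIndep hEc hΦ hF
      (fun o : Option {x // x ∈ J'} => o.elim ξ₀ (fun j => j.1.1))
      (fun o => o.elim s (fun j => j.1.2)) (fun o => o.elim g₀ gg) hinj hts hcomb hpole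
    rw [Fintype.card_option, Fintype.card_coe] at hcard
    have h2 : J'.card = ∑ ζ ∈ S₀, ord₀ ζ := by
      rw [hJ', Finset.card_sigma]
      refine Finset.sum_congr rfl fun ζ _ => ?_
      rw [Nat.card_Icc]
      omega
    rw [h2, hsum] at hcard
    omega

end
end
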